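/- arXiv:1501.00869 — 2 statements merged into one kernel-verified Lean document; each statement's English description precedes it below -/
import Mathlib

section
/- Let G be a critical graph and let xy be an edge of G with d_G(x) + d_G(y) = Δ(G) + 2. Then every vertex of N(N(x) ∪ N(y)) \ {x, y} has degree at least Δ(G) − 1, where N(S) denotes the union of the neighborhoods of the vertices in S. -/
open SimpleGraph

variable {V : Type*}

/-- `c` is a proper edge coloring of `G` using colors `0, …, n-1`:
every edge gets a color `< n`, and distinct edges sharing an endpoint
receive distinct colors. -/
def IsProperEdgeColoring (G : SimpleGraph V) (n : ℕ) (c : Sym2 V → ℕ) : Prop :=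
  (∀ e ∈ G.edgeSet, c e < n) ∧
    ∀ e₁ ∈ G.edgeSet, ∀ e₂ ∈ G.edgeSet, e₁ ≠ e₂ → (∃ v, v ∈ e₁ ∧ v ∈ e₂) →
      c e₁ ≠ c e₂

/-- The edge chromatic number `χ'(G)`: the least number of colors in a proper
edge coloring of `G`. -/
noncomputable def edgeChromaticNumber (G : SimpleGraph V) : ℕ :=
  sInf {n | ∃ c, IsProperEdgeColoring G n c}

/-- The degree `d_G(v)` of a vertex. -/
noncomputable def deg (G : SimpleGraph V) (v : V) : ℕ := (G.neighborSet v).ncard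

/-- The maximum vertex degree `Δ(G)`. -/
noncomputable def maxDeg (G : SimpleGraph V) : ℕ := sSup {d | ∃ v, deg G v = d}

/-- `G` is critical: it is class 2 (i.e. `χ'(G) ≠ Δ(G)`) and every proper
subgraph `H` of `G` satisfies `χ'(H) < χ'(G)`. -/
def IsCritical (G : SimpleGraph V) : Prop :=
  edgeChromaticNumber G ≠ maxDeg G ∧
    ∀ H : G.Subgraph, H ≠ ⊤ → edgeChromaticNumber H.coe < edgeChromaticNumber G

/-- `G` is `k`-critical: critical with maximum degree `k`. -/
def IsKCritical (G : SimpleGraph V) (k : ℕ) : Prop :=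
  IsCritical G ∧ maxDeg G = k


namespace VizingAux

open Classical in
/-- proper partial edge coloring on edge set `E₀` with `k` colors -/
def EC (E₀ : Set (Sym2 V)) (k : ℕ) (c : Sym2 V → ℕ) : Prop :=
  (∀ e ∈ E₀, c e < k) ∧
    ∀ e₁ ∈ E₀, ∀ e₂ ∈ E₀, e₁ ≠ e₂ → (∃ v, v ∈ e₁ ∧ v ∈ e₂) → c e₁ ≠ c e₂

/-- colors used at `v` -/
def used (E₀ : Set (Sym2 V)) (c : Sym2 V → ℕ) (v : V) : Set ℕ :=
  {a | ∃ e, e ∈ E₀ ∧ v ∈ e ∧ c e = a}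

/-- colors missing at `v` -/
def miss (E₀ : Set (Sym2 V)) (k : ℕ) (c : Sym2 V → ℕ) (v : V) : Set ℕ :=
  {a | a < k ∧ a ∉ used E₀ c v}

lemma mem_miss_iff {E₀ : Set (Sym2 V)} {k : ℕ} {c : Sym2 V → ℕ} {v : V} {a : ℕ} :
    a ∈ miss E₀ k c v ↔ a < k ∧ ∀ e ∈ E₀, v ∈ e → c e ≠ a := by
  constructor
  · rintro ⟨h1, h2⟩
    exact ⟨h1, fun e he hv hc => h2 ⟨e, he, hv, hc⟩⟩
  · rintro ⟨h1, h2⟩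
    exact ⟨h1, fun ⟨e, he, hv, hc⟩ => h2 e he hv hc⟩

lemma miss_lt {E₀ : Set (Sym2 V)} {k : ℕ} {c : Sym2 V → ℕ} {v : V} {a : ℕ}
    (h : a ∈ miss E₀ k c v) : a < k := h.1

lemma not_miss_of_edge {E₀ : Set (Sym2 V)} {k : ℕ} {c : Sym2 V → ℕ} {v : V} {e : Sym2 V}
    (he : e ∈ E₀) (hv : v ∈ e) : c e ∉ miss E₀ k c v := by
  intro h
  exact (mem_miss_iff.1 h).2 e he hv rfl

/-- two edges at a common vertex with the same color are equal -/
lemma edge_unique {E₀ : Set (Sym2 V)} {k : ℕ} {c : Sym2 V → ℕ} (hc : EC E₀ k c)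
    {e₁ e₂ : Sym2 V} {v : V} (h₁ : e₁ ∈ E₀) (h₂ : e₂ ∈ E₀) (hv₁ : v ∈ e₁) (hv₂ : v ∈ e₂)
    (hcc : c e₁ = c e₂) : e₁ = e₂ := by
  by_contra hne
  exact hc.2 e₁ h₁ e₂ h₂ hne ⟨v, hv₁, hv₂⟩ hcc

lemma EC_mono_k {E₀ : Set (Sym2 V)} {k k' : ℕ} {c : Sym2 V → ℕ} (hk : k ≤ k')
    (hc : EC E₀ k c) : EC E₀ k' c :=
  ⟨fun e he => lt_of_lt_of_le (hc.1 e he) hk, hc.2⟩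

lemma EC_mono_dom {E₀ E₁ : Set (Sym2 V)} {k : ℕ} {c : Sym2 V → ℕ} (hE : E₁ ⊆ E₀)
    (hc : EC E₀ k c) : EC E₁ k c :=
  ⟨fun e he => hc.1 e (hE he), fun e₁ h₁ e₂ h₂ => hc.2 e₁ (hE h₁) e₂ (hE h₂)⟩

lemma miss_anti {E₀ E₁ : Set (Sym2 V)} {k : ℕ} {c : Sym2 V → ℕ} (hE : E₁ ⊆ E₀) (v : V) :
    miss E₀ k c v ⊆ miss E₁ k c v := by
  intro a ha
  rw [mem_miss_iff] at ha ⊢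
  exact ⟨ha.1, fun e he hv => ha.2 e (hE he) hv⟩

open Classical in
noncomputable def upd (c : Sym2 V → ℕ) (e₀ : Sym2 V) (a : ℕ) : Sym2 V → ℕ :=
  fun e => if e = e₀ then a else c e

@[simp] lemma upd_self {c : Sym2 V → ℕ} {e₀ : Sym2 V} {a : ℕ} : upd c e₀ a e₀ = a := by
  simp [upd]

lemma upd_other {c : Sym2 V → ℕ} {e₀ e : Sym2 V} {a : ℕ} (h : e ≠ e₀) : upd c e₀ a e = c e := by
  simp [upd, h]

/-- recoloring an existing edge with a color missing at both endpoints -/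
lemma EC_recolor {E₀ : Set (Sym2 V)} {k : ℕ} {c : Sym2 V → ℕ} (hc : EC E₀ k c)
    {p q : V} {a : ℕ} (he : s(p,q) ∈ E₀)
    (hp : a ∈ miss E₀ k c p) (hq : a ∈ miss E₀ k c q) :
    EC E₀ k (upd c s(p,q) a) := by
  constructor
  · intro e heE
    by_cases h : e = s(p,q)
    · subst h; simpa using hp.1
    · rw [upd_other h]; exact hc.1 e heE
  · intro e₁ h₁ e₂ h₂ hne ⟨v, hv₁, hv₂⟩
    by_cases he₁ : e₁ = s(p,q) <;> by_cases he₂ : e₂ = s(p,q)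
    · exact absurd (he₁.trans he₂.symm) hne
    · subst he₁
      rw [upd_self, upd_other he₂]
      intro hcontra
      rcases Sym2.mem_iff.1 hv₁ with rfl | rfl
      · exact (mem_miss_iff.1 hp).2 e₂ h₂ hv₂ hcontra.symm
      · exact (mem_miss_iff.1 hq).2 e₂ h₂ hv₂ hcontra.symm
    · subst he₂
      rw [upd_self, upd_other he₁]
      intro hcontra
      rcases Sym2.mem_iff.1 hv₂ with rfl | rfl
      · exact (mem_miss_iff.1 hp).2 e₁ h₁ hv₁ hcontra
      · exact (mem_miss_iff.1 hq).2 e₁ h₁ hv₁ hcontra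
    · rw [upd_other he₁, upd_other he₂]
      exact hc.2 e₁ h₁ e₂ h₂ hne ⟨v, hv₁, hv₂⟩

/-- extending the coloring to a new edge with a color missing at both endpoints -/
lemma EC_extend {E₀ : Set (Sym2 V)} {k : ℕ} {c : Sym2 V → ℕ} (hc : EC E₀ k c)
    {p q : V} {a : ℕ} (he : s(p,q) ∉ E₀)
    (hp : a ∈ miss E₀ k c p) (hq : a ∈ miss E₀ k c q) :
    EC (insert s(p,q) E₀) k (upd c s(p,q) a) := by
  constructor
  · intro e heE
    rcases heE with rfl | heE
    · simpa using hp.1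
    · rw [upd_other (by rintro rfl; exact he heE)]; exact hc.1 e heE
  · intro e₁ h₁ e₂ h₂ hne ⟨v, hv₁, hv₂⟩
    rcases h₁ with rfl | h₁ <;> rcases h₂ with rfl | h₂
    · exact absurd rfl hne
    · rw [upd_self, upd_other (by rintro rfl; exact he h₂)]
      intro hcontra
      rcases Sym2.mem_iff.1 hv₁ with rfl | rfl
      · exact (mem_miss_iff.1 hp).2 e₂ h₂ hv₂ hcontra.symm
      · exact (mem_miss_iff.1 hq).2 e₂ h₂ hv₂ hcontra.symm
    · rw [upd_self, upd_other (by rintro rfl; exact he h₁)]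
      intro hcontra
      rcases Sym2.mem_iff.1 hv₂ with rfl | rfl
      · exact (mem_miss_iff.1 hp).2 e₁ h₁ hv₁ hcontra
      · exact (mem_miss_iff.1 hq).2 e₁ h₁ hv₁ hcontra
    · rw [upd_other (by rintro rfl; exact he h₁), upd_other (by rintro rfl; exact he h₂)]
      exact hc.2 e₁ h₁ e₂ h₂ hne ⟨v, hv₁, hv₂⟩

/-- effect of recoloring on the missing set of an endpoint -/
lemma miss_recolor_endpoint {E₀ : Set (Sym2 V)} {k : ℕ} {c : Sym2 V → ℕ} (hc : EC E₀ k c)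
    {p q v : V} {a ρ : ℕ} (he : s(p,q) ∈ E₀) (hv : v ∈ s(p,q)) :
    ρ ∈ miss E₀ k (upd c s(p,q) a) v ↔ ρ ≠ a ∧ (ρ = c s(p,q) ∨ ρ ∈ miss E₀ k c v) := by
  constructor
  · intro hm
    have h1 := (mem_miss_iff.1 hm).2 s(p,q) he hv
    rw [upd_self] at h1
    refine ⟨fun h => h1 h.symm, ?_⟩
    by_cases h2 : ρ = c s(p,q)
    · exact Or.inl h2
    · refine Or.inr (mem_miss_iff.2 ⟨(mem_miss_iff.1 hm).1, fun e heE hve => ?_⟩)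
      by_cases h3 : e = s(p,q)
      · subst h3; exact fun hh => h2 hh.symm
      · have := (mem_miss_iff.1 hm).2 e heE hve
        rwa [upd_other h3] at this
  · rintro ⟨hρa, hρ⟩
    rcases hρ with hρ | hρ
    · refine mem_miss_iff.2 ⟨hρ ▸ hc.1 _ he, fun e heE hve => ?_⟩
      by_cases h3 : e = s(p,q)
      · subst h3; rw [upd_self]; exact fun h => hρa h.symm
      · rw [upd_other h3]
        intro hcc
        exact h3 (edge_unique hc heE he hve hv (hcc.trans hρ))
    · refine mem_miss_iff.2 ⟨hρ.1, fun e heE hve => ?_⟩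
      by_cases h3 : e = s(p,q)
      · subst h3; rw [upd_self]; exact fun h => hρa h.symm
      · rw [upd_other h3]; exact (mem_miss_iff.1 hρ).2 e heE hve

/-- recoloring does not affect missing sets away from the edge -/
lemma miss_recolor_far {E₀ : Set (Sym2 V)} {k : ℕ} {c : Sym2 V → ℕ}
    {e₀ : Sym2 V} {v : V} {a ρ : ℕ} (hv : v ∉ e₀) :
    ρ ∈ miss E₀ k (upd c e₀ a) v ↔ ρ ∈ miss E₀ k c v := by
  rw [mem_miss_iff, mem_miss_iff]
  constructor <;> rintro ⟨h1, h2⟩ <;> refine ⟨h1, fun e he hve => ?_⟩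
  · have := h2 e he hve
    rwa [upd_other (by rintro rfl; exact hv hve)] at this
  · rw [upd_other (by rintro rfl; exact hv hve)]
    exact h2 e he hve

/-- effect of extending on the missing set of an endpoint -/
lemma miss_extend_endpoint {E₀ : Set (Sym2 V)} {k : ℕ} {c : Sym2 V → ℕ}
    {p q v : V} {a ρ : ℕ} (he : s(p,q) ∉ E₀) (hv : v ∈ s(p,q)) :
    ρ ∈ miss (insert s(p,q) E₀) k (upd c s(p,q) a) v ↔ ρ ≠ a ∧ ρ ∈ miss E₀ k c v := by
  rw [mem_miss_iff, mem_miss_iff]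
  constructor
  · rintro ⟨h1, h2⟩
    have := h2 s(p,q) (Set.mem_insert _ _) hv
    rw [upd_self] at this
    refine ⟨fun h => this h.symm, h1, fun e heE hve => ?_⟩
    have h4 := h2 e (Set.mem_insert_of_mem _ heE) hve
    rwa [upd_other (by rintro rfl; exact he heE)] at h4
  · rintro ⟨hρa, h1, h2⟩
    refine ⟨h1, fun e heE hve => ?_⟩
    rcases heE with rfl | heE
    · rw [upd_self]; exact fun h => hρa h.symm
    · rw [upd_other (by rintro rfl; exact he heE)]
      exact h2 e heE hve

lemma miss_extend_far {E₀ : Set (Sym2 V)} {k : ℕ} {c : Sym2 V → ℕ}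
    {e₀ : Sym2 V} {v : V} {a ρ : ℕ} (hv : v ∉ e₀) :
    ρ ∈ miss (insert e₀ E₀) k (upd c e₀ a) v ↔ ρ ∈ miss E₀ k c v := by
  rw [mem_miss_iff, mem_miss_iff]
  constructor <;> rintro ⟨h1, h2⟩ <;> refine ⟨h1, fun e he hve => ?_⟩
  · have := h2 e (Set.mem_insert_of_mem _ he) hve
    rwa [upd_other (by rintro rfl; exact hv hve)] at this
  · rcases he with rfl | he
    · exact absurd hve hv
    · rw [upd_other (by rintro rfl; exact hv hve)]
      exact h2 e he hve

/-- forgetting one edge of the coloring: missing set of an endpoint -/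
lemma miss_forget_endpoint {E₀ : Set (Sym2 V)} {k : ℕ} {c : Sym2 V → ℕ} (hc : EC E₀ k c)
    {f : Sym2 V} {v : V} {ρ : ℕ} (hf : f ∈ E₀) (hv : v ∈ f) :
    ρ ∈ miss (E₀ \ {f}) k c v ↔ ρ = c f ∨ ρ ∈ miss E₀ k c v := by
  rw [mem_miss_iff, mem_miss_iff]
  constructor
  · rintro ⟨h1, h2⟩
    by_cases h3 : ρ = c f
    · exact Or.inl h3
    · exact Or.inr ⟨h1, fun e he hve => by
        by_cases h4 : e = f
        · subst h4; exact fun hh => h3 hh.symm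
        · exact h2 e ⟨he, h4⟩ hve⟩
  · rintro (rfl | ⟨h1, h2⟩)
    · refine ⟨hc.1 f hf, fun e he hve hcc => ?_⟩
      exact he.2 (edge_unique hc he.1 hf hve hv hcc)
    · exact ⟨h1, fun e he hve => h2 e he.1 hve⟩

lemma miss_forget_far {E₀ : Set (Sym2 V)} {k : ℕ} {c : Sym2 V → ℕ}
    {f : Sym2 V} {v : V} {ρ : ℕ} (hv : v ∉ f) :
    ρ ∈ miss (E₀ \ {f}) k c v ↔ ρ ∈ miss E₀ k c v := by
  rw [mem_miss_iff, mem_miss_iff]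
  constructor <;> rintro ⟨h1, h2⟩ <;> refine ⟨h1, fun e he hve => ?_⟩
  · exact h2 e ⟨he, by rintro rfl; exact hv hve⟩ hve
  · exact h2 e he.1 hve

end VizingAux

namespace VizingAux

variable [Fintype V]

lemma ncard_fin {α : Type*} (s : Set α) [Fintype s] : s.ncard = Fintype.card s := by
  rw [Set.ncard_eq_toFinset_card']
  exact Set.toFinset_card s

lemma finite_sym2 : Finite (Sym2 V) := by infer_instance

lemma ncard_Iio (k : ℕ) : (Set.Iio k).ncard = k := by
  rw [← Finset.coe_range, Set.ncard_coe_finset, Finset.card_range]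

/-- counting: (#edges at v) + (#missing colors at v) = k -/
lemma count_miss {E₀ : Set (Sym2 V)} {k : ℕ} {c : Sym2 V → ℕ} (hc : EC E₀ k c) (v : V) :
    ({e | e ∈ E₀ ∧ v ∈ e}).ncard + (miss E₀ k c v).ncard = k := by
  have hfin : ({e | e ∈ E₀ ∧ v ∈ e}).Finite := by
    have : Finite (Sym2 V) := finite_sym2
    exact Set.toFinite _
  have himg : used E₀ c v = c '' {e | e ∈ E₀ ∧ v ∈ e} := by
    ext a
    constructor
    · rintro ⟨e, he, hv, rfl⟩; exact ⟨e, ⟨he, hv⟩, rfl⟩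
    · rintro ⟨e, ⟨he, hv⟩, rfl⟩; exact ⟨e, he, hv, rfl⟩
  have hinj : Set.InjOn c {e | e ∈ E₀ ∧ v ∈ e} := by
    intro e₁ h₁ e₂ h₂ hcc
    exact edge_unique hc h₁.1 h₂.1 h₁.2 h₂.2 hcc
  have hsub : used E₀ c v ⊆ Set.Iio k := by
    rintro a ⟨e, he, hv, rfl⟩; exact hc.1 e he
  have hmiss : miss E₀ k c v = Set.Iio k \ used E₀ c v := by
    ext a; exact Iff.rfl
  have hIio : (Set.Iio k).Finite := Set.finite_Iio k
  have h1 : (used E₀ c v).ncard = ({e | e ∈ E₀ ∧ v ∈ e}).ncard := by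
    rw [himg]; exact Set.ncard_image_of_injOn hinj
  have h2 : (miss E₀ k c v).ncard = k - (used E₀ c v).ncard := by
    rw [hmiss, Set.ncard_diff hsub (hIio.subset hsub), ncard_Iio]
  have h3 : (used E₀ c v).ncard ≤ k := by
    have := Set.ncard_le_ncard hsub hIio
    rwa [ncard_Iio] at this
  omega

lemma ncard_inc (G : SimpleGraph V) (v : V) :
    ({e | e ∈ G.edgeSet ∧ v ∈ e}).ncard = deg G v := by
  classical
  have h1 : {e | e ∈ G.edgeSet ∧ v ∈ e} = G.incidenceSet v := rfl
  have h2 : (G.incidenceSet v).ncard = Fintype.card (G.incidenceSet v) := ncard_fin _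
  have h3 : Fintype.card (G.incidenceSet v) = G.degree v :=
    G.card_incidenceSet_eq_degree v
  have h4 : deg G v = G.degree v := by
    rw [deg, ncard_fin, card_neighborSet_eq_degree]
  rw [h1, h2, h3, h4]

lemma ncard_inc_minus_mem (G : SimpleGraph V) {f : Sym2 V} {v : V}
    (hf : f ∈ G.edgeSet) (hv : v ∈ f) :
    ({e | e ∈ G.edgeSet \ {f} ∧ v ∈ e}).ncard = deg G v - 1 := by
  have h1 : {e | e ∈ G.edgeSet \ {f} ∧ v ∈ e} = {e | e ∈ G.edgeSet ∧ v ∈ e} \ {f} := by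
    ext e
    simp only [Set.mem_setOf_eq, Set.mem_diff, Set.mem_singleton_iff]
    tauto
  rw [h1, Set.ncard_diff_singleton_of_mem (show f ∈ {e | e ∈ G.edgeSet ∧ v ∈ e} from ⟨hf, hv⟩), ncard_inc]

lemma ncard_inc_minus_not_mem (G : SimpleGraph V) {f : Sym2 V} {v : V}
    (hv : v ∉ f) :
    ({e | e ∈ G.edgeSet \ {f} ∧ v ∈ e}).ncard = deg G v := by
  have h1 : {e | e ∈ G.edgeSet \ {f} ∧ v ∈ e} = {e | e ∈ G.edgeSet ∧ v ∈ e} := by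
    ext e
    simp only [Set.mem_setOf_eq, Set.mem_diff, Set.mem_singleton_iff]
    constructor
    · rintro ⟨⟨h1, _⟩, h2⟩; exact ⟨h1, h2⟩
    · rintro ⟨h1, h2⟩
      exact ⟨⟨h1, by rintro rfl; exact hv h2⟩, h2⟩
  rw [h1, ncard_inc]

end VizingAux

namespace VizingAux

section Kempe

variable {E₀ : Set (Sym2 V)} {k : ℕ} {c : Sym2 V → ℕ} {α β : ℕ}

/-- the graph of edges colored `α` or `β` -/
def KG (E₀ : Set (Sym2 V)) (c : Sym2 V → ℕ) (α β : ℕ) : SimpleGraph V where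
  Adj u v := u ≠ v ∧ s(u,v) ∈ E₀ ∧ (c s(u,v) = α ∨ c s(u,v) = β)
  symm := by
    constructor
    intro u v ⟨h1, h2, h3⟩
    refine ⟨h1.symm, ?_, ?_⟩ <;> rwa [Sym2.eq_swap]
  loopless := ⟨fun v h => h.1 rfl⟩

/-- the Kempe component of `v₀` -/
def comp (E₀ : Set (Sym2 V)) (c : Sym2 V → ℕ) (α β : ℕ) (v₀ : V) : Set V :=
  {v | (KG E₀ c α β).Reachable v₀ v}

lemma mem_comp_self (v₀ : V) : v₀ ∈ comp E₀ c α β v₀ := Reachable.refl v₀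

lemma comp_closed {v₀ v v' : V} (hv : v ∈ comp E₀ c α β v₀)
    (h : (KG E₀ c α β).Adj v v') : v' ∈ comp E₀ c α β v₀ :=
  hv.trans h.reachable

lemma comp_disjoint {v₀ v₁ z : V} (h₀ : z ∈ comp E₀ c α β v₀)
    (h₁ : z ∈ comp E₀ c α β v₁) {w : V} (hw : w ∈ comp E₀ c α β v₁) :
    w ∈ comp E₀ c α β v₀ :=
  (h₀.trans h₁.symm).trans hw

/-- all endpoints of an `{α,β}`-colored edge meeting the component lie in the component -/
lemma edge_in_comp {v₀ v v' : V} {e : Sym2 V} (he : e ∈ E₀)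
    (hce : c e = α ∨ c e = β) (hv : v ∈ e) (hvc : v ∈ comp E₀ c α β v₀)
    (hv' : v' ∈ e) : v' ∈ comp E₀ c α β v₀ := by
  obtain ⟨z, rfl⟩ := Sym2.mem_iff_exists.1 hv
  rcases Sym2.mem_iff.1 hv' with rfl | rfl
  · exact hvc
  · by_cases hz : v = v'
    · exact hz ▸ hvc
    · exact comp_closed hvc ⟨hz, he, hce⟩

/-- a vertex missing both colors and distinct from `v₀` is not in the component -/
lemma not_mem_comp_of_miss_both {v₀ u : V} (hα : α ∈ miss E₀ k c u)
    (hβ : β ∈ miss E₀ k c u) (hne : u ≠ v₀) : u ∉ comp E₀ c α β v₀ := by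
  intro hmem
  obtain ⟨z, hadj, -, -⟩ := SimpleGraph.Walk.exists_eq_cons_of_ne hne
    (hmem : (KG E₀ c α β).Reachable v₀ u).some.reverse
  rcases hadj.2.2 with h | h
  · exact (mem_miss_iff.1 hα).2 _ hadj.2.1 (Sym2.mem_mk_left _ _) h
  · exact (mem_miss_iff.1 hβ).2 _ hadj.2.1 (Sym2.mem_mk_left _ _) h

def flipc (α β a : ℕ) : ℕ := if a = α then β else if a = β then α else a

lemma flipc_invol (a : ℕ) : flipc α β (flipc α β a) = a := by
  unfold flipc
  split_ifs <;> omega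

lemma flipc_lt (hα : α < k) (hβ : β < k) {a : ℕ} : flipc α β a < k ↔ a < k := by
  unfold flipc
  split_ifs <;> omega

lemma flipc_left : flipc α β α = β := by simp [flipc]

lemma flipc_right (hne : α ≠ β) : flipc α β β = α := by
  simp [flipc, hne.symm]

lemma flipc_other {a : ℕ} (h1 : a ≠ α) (h2 : a ≠ β) : flipc α β a = a := by
  simp [flipc, h1, h2]

lemma flipc_fix_iff (hne : α ≠ β) {a b : ℕ} (h1 : b ≠ α) (h2 : b ≠ β) :
    flipc α β a = b ↔ a = b := by
  unfold flipc
  split_ifs with g1 g2 <;> constructor <;> intro h <;> omega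

open Classical in
/-- swap the two colors on the Kempe component of `v₀` -/
noncomputable def kswap (E₀ : Set (Sym2 V)) (c : Sym2 V → ℕ) (α β : ℕ) (v₀ : V) :
    Sym2 V → ℕ :=
  fun e => if (∃ v ∈ comp E₀ c α β v₀, v ∈ e) ∧ e ∈ E₀ ∧ (c e = α ∨ c e = β)
    then flipc α β (c e) else c e

lemma kswap_far {v₀ : V} {e : Sym2 V} {v : V} (hv : v ∈ e)
    (hvc : v ∉ comp E₀ c α β v₀) : kswap E₀ c α β v₀ e = c e := by
  unfold kswap
  rw [if_neg]
  rintro ⟨⟨w, hw, hwe⟩, he, hce⟩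
  exact hvc (edge_in_comp he hce hwe hw hv)

lemma kswap_not_kedge {v₀ : V} {e : Sym2 V} (h1 : c e ≠ α) (h2 : c e ≠ β) :
    kswap E₀ c α β v₀ e = c e := by
  unfold kswap
  rw [if_neg]
  rintro ⟨-, -, hce⟩
  rcases hce with h | h
  · exact h1 h
  · exact h2 h

lemma kswap_flip {v₀ : V} {e : Sym2 V} {v : V} (he : e ∈ E₀)
    (hce : c e = α ∨ c e = β) (hv : v ∈ e) (hvc : v ∈ comp E₀ c α β v₀) :
    kswap E₀ c α β v₀ e = flipc α β (c e) := by
  unfold kswap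
  rw [if_pos ⟨⟨v, hvc, hv⟩, he, hce⟩]

/-- key pointwise description at a vertex of the component -/
lemma kswap_edge_eq_iff (hne : α ≠ β) {v₀ : V} {e : Sym2 V} {v : V} {ρ : ℕ}
    (he : e ∈ E₀) (hv : v ∈ e) (hvc : v ∈ comp E₀ c α β v₀) :
    kswap E₀ c α β v₀ e = ρ ↔ c e = flipc α β ρ := by
  by_cases hce : c e = α ∨ c e = β
  · rw [kswap_flip he hce hv hvc]
    constructor
    · rintro rfl; rw [flipc_invol]
    · intro h; rw [h, flipc_invol]
  · push_neg at hce
    rw [kswap_not_kedge hce.1 hce.2]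
    constructor
    · rintro rfl
      rw [flipc_other hce.1 hce.2]
    · intro h
      by_cases hρ : ρ = α
      · subst hρ; rw [flipc_left] at h; exact absurd h hce.2
      · by_cases hρ' : ρ = β
        · subst hρ'; rw [flipc_right hne] at h; exact absurd h hce.1
        · rwa [flipc_other hρ hρ'] at h

lemma kswap_miss_not_mem {v₀ v : V} {ρ : ℕ} (hvc : v ∉ comp E₀ c α β v₀) :
    ρ ∈ miss E₀ k (kswap E₀ c α β v₀) v ↔ ρ ∈ miss E₀ k c v := by
  rw [mem_miss_iff, mem_miss_iff]
  constructor <;> rintro ⟨h1, h2⟩ <;> refine ⟨h1, fun e he hve => ?_⟩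
  · have := h2 e he hve
    rwa [kswap_far hve hvc] at this
  · rw [kswap_far hve hvc]
    exact h2 e he hve

lemma kswap_miss_mem (hne : α ≠ β) (hα : α < k) (hβ : β < k) {v₀ v : V} {ρ : ℕ}
    (hvc : v ∈ comp E₀ c α β v₀) :
    ρ ∈ miss E₀ k (kswap E₀ c α β v₀) v ↔ flipc α β ρ ∈ miss E₀ k c v := by
  rw [mem_miss_iff, mem_miss_iff]
  have hk : ρ < k ↔ flipc α β ρ < k := (flipc_lt hα hβ).symm
  constructor <;> rintro ⟨h1, h2⟩
  · refine ⟨hk.1 h1, fun e he hve => ?_⟩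
    intro hcc
    have : kswap E₀ c α β v₀ e = ρ := by
      rw [kswap_edge_eq_iff hne he hve hvc]; exact hcc
    exact h2 e he hve this
  · refine ⟨hk.2 h1, fun e he hve => ?_⟩
    intro hcc
    rw [kswap_edge_eq_iff hne he hve hvc] at hcc
    exact h2 e he hve hcc

/-- Kempe swaps preserve properness -/
lemma EC_kswap (hc : EC E₀ k c) (hne : α ≠ β) (hα : α < k) (hβ : β < k) (v₀ : V) :
    EC E₀ k (kswap E₀ c α β v₀) := by
  constructor
  · intro e he
    by_cases hce : c e = α ∨ c e = β
    · by_cases hmem : ∃ v ∈ comp E₀ c α β v₀, v ∈ e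
      · obtain ⟨v, hvc, hv⟩ := hmem
        rw [kswap_flip he hce hv hvc, flipc_lt hα hβ]
        exact hc.1 e he
      · unfold kswap
        rw [if_neg (fun h => hmem h.1)]
        exact hc.1 e he
    · push_neg at hce
      rw [kswap_not_kedge hce.1 hce.2]
      exact hc.1 e he
  · intro e₁ h₁ e₂ h₂ hne12 ⟨v, hv₁, hv₂⟩
    have hold := hc.2 e₁ h₁ e₂ h₂ hne12 ⟨v, hv₁, hv₂⟩
    by_cases hvc : v ∈ comp E₀ c α β v₀
    · rw [ne_eq, kswap_edge_eq_iff hne h₁ hv₁ hvc]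
      intro hcontra
      have h3 : kswap E₀ c α β v₀ e₂ = kswap E₀ c α β v₀ e₂ := rfl
      rw [kswap_edge_eq_iff hne h₂ hv₂ hvc] at h3
      exact hold (hcontra.trans h3.symm)
    · -- v not in the component: neither edge is flipped (at shared vertex)
      rw [kswap_far hv₁ hvc, kswap_far hv₂ hvc]
      exact hold

end Kempe

end VizingAux

namespace VizingAux

lemma comp_symm {E₀ : Set (Sym2 V)} {c : Sym2 V → ℕ} {α β : ℕ} {v₀ v : V}
    (h : v ∈ comp E₀ c α β v₀) : v₀ ∈ comp E₀ c α β v := h.symm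

end VizingAux

namespace VizingAux

lemma flipc_eq_snd_iff {α β a : ℕ} (hne : α ≠ β) : flipc α β a = β ↔ a = α := by
  unfold flipc
  split_ifs <;> omega

end VizingAux

namespace VizingAux

section ThreeLow

variable [Fintype V] {E₀ : Set (Sym2 V)} {k : ℕ} {c : Sym2 V → ℕ} {α β : ℕ}

lemma exists_pred {K : SimpleGraph V} {v₀ u : V} (hr : K.Reachable v₀ u) (hne : u ≠ v₀) :
    ∃ z, K.Adj u z ∧ K.dist v₀ z + 1 = K.dist v₀ u := by
  obtain ⟨p, hp⟩ := hr.exists_walk_length_eq_dist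
  obtain ⟨z, hadj, q, hq⟩ := SimpleGraph.Walk.exists_eq_cons_of_ne hne p.reverse
  refine ⟨z, hadj, ?_⟩
  have h1 : K.dist v₀ z ≤ q.reverse.length := dist_le _
  have h2 : q.reverse.length = q.length := SimpleGraph.Walk.length_reverse _
  have h3 : p.reverse.length = p.length := SimpleGraph.Walk.length_reverse _
  have h4 : p.reverse.length = q.length + 1 := by rw [hq]; simp
  obtain ⟨r, hr2⟩ := (hr.trans hadj.reachable).exists_walk_length_eq_dist
  have h5 : K.dist v₀ u ≤ K.dist v₀ z + 1 := by
    have := dist_le (r.concat hadj.symm)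
    rwa [SimpleGraph.Walk.length_concat, hr2] at this
  omega

/-- each vertex has at most 2 neighbors in the Kempe graph -/
lemma KG_two_nbrs (hc : EC E₀ k c) (v : V) {z₁ z₂ z₃ : V}
    (h1 : (KG E₀ c α β).Adj v z₁) (h2 : (KG E₀ c α β).Adj v z₂)
    (h3 : (KG E₀ c α β).Adj v z₃) (h12 : z₁ ≠ z₂) (h13 : z₁ ≠ z₃) (h23 : z₂ ≠ z₃) :
    False := by
  have key : ∀ z z' : V, (KG E₀ c α β).Adj v z → (KG E₀ c α β).Adj v z' →
      c s(v,z) = c s(v,z') → z = z' := by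
    intro z z' hz hz' hcc
    have := edge_unique hc hz.2.1 hz'.2.1 (Sym2.mem_mk_left _ _) (Sym2.mem_mk_left _ _) hcc
    have h := Sym2.eq_iff.1 this
    rcases h with ⟨-, h⟩ | ⟨h, h'⟩
    · exact h
    · exact h'.trans h
  -- the three colors are among {α, β}, so two are equal
  rcases h1.2.2 with ha1 | hb1 <;> rcases h2.2.2 with ha2 | hb2 <;>
    rcases h3.2.2 with ha3 | hb3
  · exact h12 (key _ _ h1 h2 (ha1.trans ha2.symm))
  · exact h12 (key _ _ h1 h2 (ha1.trans ha2.symm))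
  · exact h13 (key _ _ h1 h3 (ha1.trans ha3.symm))
  · exact h23 (key _ _ h2 h3 (hb2.trans hb3.symm))
  · exact h23 (key _ _ h2 h3 (ha2.trans ha3.symm))
  · exact h13 (key _ _ h1 h3 (hb1.trans hb3.symm))
  · exact h12 (key _ _ h1 h2 (hb1.trans hb2.symm))
  · exact h12 (key _ _ h1 h2 (hb1.trans hb2.symm))

/-- a vertex missing one of the two colors has at most 1 neighbor in the Kempe graph -/
lemma KG_low_nbrs (hc : EC E₀ k c) {v : V}
    (hlow : α ∈ miss E₀ k c v ∨ β ∈ miss E₀ k c v) {z₁ z₂ : V}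
    (h1 : (KG E₀ c α β).Adj v z₁) (h2 : (KG E₀ c α β).Adj v z₂) (h12 : z₁ ≠ z₂) :
    False := by
  have key : ∀ z : V, (KG E₀ c α β).Adj v z →
      (α ∈ miss E₀ k c v → c s(v,z) = β) ∧ (β ∈ miss E₀ k c v → c s(v,z) = α) := by
    intro z hz
    constructor
    · intro hm
      rcases hz.2.2 with h | h
      · exact absurd h (fun hh => (mem_miss_iff.1 hm).2 _ hz.2.1 (Sym2.mem_mk_left _ _) hh)
      · exact h
    · intro hm
      rcases hz.2.2 with h | h
      · exact h
      · exact absurd h (fun hh => (mem_miss_iff.1 hm).2 _ hz.2.1 (Sym2.mem_mk_left _ _) hh)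
  have huniq : ∀ z z' : V, (KG E₀ c α β).Adj v z → (KG E₀ c α β).Adj v z' →
      c s(v,z) = c s(v,z') → z = z' := by
    intro z z' hz hz' hcc
    have := edge_unique hc hz.2.1 hz'.2.1 (Sym2.mem_mk_left _ _) (Sym2.mem_mk_left _ _) hcc
    rcases Sym2.eq_iff.1 this with ⟨-, h⟩ | ⟨h, h'⟩
    · exact h
    · exact h'.trans h
  rcases hlow with hm | hm
  · exact h12 (huniq _ _ h1 h2 (((key _ h1).1 hm).trans ((key _ h2).1 hm).symm))
  · exact h12 (huniq _ _ h1 h2 (((key _ h1).2 hm).trans ((key _ h2).2 hm).symm))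

end ThreeLow

end VizingAux

namespace VizingAux

section ThreeLow2

variable [Fintype V] {E₀ : Set (Sym2 V)} {k : ℕ} {c : Sym2 V → ℕ} {α β : ℕ}

/-- restriction of the Kempe graph to the component of `v₀` -/
def KGS (E₀ : Set (Sym2 V)) (c : Sym2 V → ℕ) (α β : ℕ) (v₀ : V) : SimpleGraph V where
  Adj u v := (KG E₀ c α β).Adj u v ∧ u ∈ comp E₀ c α β v₀ ∧ v ∈ comp E₀ c α β v₀
  symm := by
    constructor
    intro u v ⟨h1, h2, h3⟩
    exact ⟨h1.symm, h3, h2⟩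
  loopless := ⟨fun v h => h.1.1 rfl⟩

/-- a Kempe component contains at most two vertices missing one of the two colors -/
lemma three_low (hc : EC E₀ k c) {v₀ a b d : V}
    (haS : a ∈ comp E₀ c α β v₀) (hbS : b ∈ comp E₀ c α β v₀) (hdS : d ∈ comp E₀ c α β v₀)
    (hab : a ≠ b) (had : a ≠ d) (hbd : b ≠ d)
    (hla : α ∈ miss E₀ k c a ∨ β ∈ miss E₀ k c a)
    (hlb : α ∈ miss E₀ k c b ∨ β ∈ miss E₀ k c b)
    (hld : α ∈ miss E₀ k c d ∨ β ∈ miss E₀ k c d) : False := by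
  classical
  set K := KG E₀ c α β with hK
  set S := comp E₀ c α β v₀ with hS
  set KS := KGS E₀ c α β v₀ with hKS
  have hKSadj : ∀ u v : V, KS.Adj u v ↔ (K.Adj u v ∧ u ∈ S ∧ v ∈ S) := fun u v => Iff.rfl
  letI : Fintype ↥S := Fintype.ofFinite _
  set SF : Finset V := S.toFinset with hSF
  have hmemSF : ∀ v : V, v ∈ SF ↔ v ∈ S := fun v => Set.mem_toFinset
  -- degree bounds
  have hdeg2 : ∀ v : V, KS.degree v ≤ 2 := by
    intro v
    by_contra hcon
    push_neg at hcon
    obtain ⟨z₁, z₂, z₃, hz₁, hz₂, hz₃, h12, h13, h23⟩ :=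
      Finset.two_lt_card_iff.1 hcon
    rw [SimpleGraph.mem_neighborFinset] at hz₁ hz₂ hz₃
    exact KG_two_nbrs hc v hz₁.1 hz₂.1 hz₃.1 h12 h13 h23
  have hdeg1 : ∀ v : V, (α ∈ miss E₀ k c v ∨ β ∈ miss E₀ k c v) → KS.degree v ≤ 1 := by
    intro v hlow
    by_contra hcon
    push_neg at hcon
    obtain ⟨z₁, hz₁, z₂, hz₂, h12⟩ := Finset.one_lt_card.1 hcon
    rw [SimpleGraph.mem_neighborFinset] at hz₁ hz₂
    exact KG_low_nbrs hc hlow hz₁.1 hz₂.1 h12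
  have hdeg0 : ∀ v : V, v ∉ S → KS.degree v = 0 := by
    intro v hv
    have h1 : KS.neighborFinset v = ∅ := by
      ext z
      simp only [SimpleGraph.mem_neighborFinset, Finset.notMem_empty, iff_false]
      exact fun h => hv h.2.1
    have h2 : KS.degree v = (KS.neighborFinset v).card := rfl
    rw [h2, h1, Finset.card_empty]
  -- handshake
  have hhand : ∑ v : V, KS.degree v = 2 * KS.edgeFinset.card :=
    SimpleGraph.sum_degrees_eq_twice_card_edges KS
  have hsum1 : ∑ v : V, KS.degree v = ∑ v ∈ SF, KS.degree v := by
    refine (Finset.sum_subset (Finset.subset_univ SF) ?_).symm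
    intro v _ hv
    exact hdeg0 v (fun h => hv ((hmemSF v).2 h))
  -- the three low vertices
  set T : Finset V := {a, b, d} with hT
  have hTsub : T ⊆ SF := by
    intro v hv
    simp only [hT, Finset.mem_insert, Finset.mem_singleton] at hv
    rcases hv with rfl | rfl | rfl
    · exact (hmemSF _).2 haS
    · exact (hmemSF _).2 hbS
    · exact (hmemSF _).2 hdS
  have hTcard : T.card = 3 := by
    rw [hT]
    rw [Finset.card_insert_of_notMem (by simp [hab, had]),
      Finset.card_insert_of_notMem (by simp [hbd]), Finset.card_singleton]
  have hsplit : ∑ v ∈ SF \ T, KS.degree v + ∑ v ∈ T, KS.degree v = ∑ v ∈ SF, KS.degree v :=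
    Finset.sum_sdiff hTsub
  have hsumT : ∑ v ∈ T, KS.degree v ≤ 3 := by
    calc ∑ v ∈ T, KS.degree v ≤ ∑ _v ∈ T, 1 := by
          refine Finset.sum_le_sum ?_
          intro v hv
          simp only [hT, Finset.mem_insert, Finset.mem_singleton] at hv
          rcases hv with rfl | rfl | rfl
          · exact hdeg1 v hla
          · exact hdeg1 v hlb
          · exact hdeg1 v hld
      _ = 3 := by rw [Finset.sum_const, hTcard]; simp
  have hsumRest : ∑ v ∈ SF \ T, KS.degree v ≤ 2 * (SF \ T).card := by
    calc ∑ v ∈ SF \ T, KS.degree v ≤ ∑ _v ∈ SF \ T, 2 :=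
          Finset.sum_le_sum (fun v _ => hdeg2 v)
      _ = 2 * (SF \ T).card := by rw [Finset.sum_const, smul_eq_mul]; ring
  have hcardsdiff : (SF \ T).card = SF.card - 3 := by rw [Finset.card_sdiff_of_subset hTsub, hTcard]
  have hScard3 : 3 ≤ SF.card := hTcard ▸ Finset.card_le_card hTsub
  -- injection from SF.erase v₀ into the edges
  have hex : ∀ u, u ∈ S → u ≠ v₀ → ∃ z, K.Adj u z ∧ K.dist v₀ z + 1 = K.dist v₀ u :=
    fun u hu hne => exists_pred hu hne
  choose! P hP1 hP2 using hex
  have hinj : SF.card ≤ KS.edgeFinset.card + 1 := by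
    have hv₀ : v₀ ∈ SF := (hmemSF _).2 (mem_comp_self v₀)
    have hce : (SF.erase v₀).card = SF.card - 1 := Finset.card_erase_of_mem hv₀
    have hmain : (SF.erase v₀).card ≤ KS.edgeFinset.card := by
      refine Finset.card_le_card_of_injOn (fun u => s(u, P u)) ?_ ?_
      · intro u hu
        have hu1 : u ∈ S := (hmemSF _).1 (Finset.mem_of_mem_erase hu)
        have hu2 : u ≠ v₀ := Finset.ne_of_mem_erase hu
        have hadj : K.Adj u (P u) := hP1 u hu1 hu2
        rw [Finset.mem_coe, SimpleGraph.mem_edgeFinset, SimpleGraph.mem_edgeSet]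
        exact ⟨hadj, hu1, comp_closed hu1 hadj⟩
      · intro u₁ hu₁ u₂ hu₂ heq
        have h1S : u₁ ∈ S := (hmemSF _).1 (Finset.mem_of_mem_erase hu₁)
        have h1ne : u₁ ≠ v₀ := Finset.ne_of_mem_erase hu₁
        have h2S : u₂ ∈ S := (hmemSF _).1 (Finset.mem_of_mem_erase hu₂)
        have h2ne : u₂ ≠ v₀ := Finset.ne_of_mem_erase hu₂
        rcases Sym2.eq_iff.1 heq with ⟨h, -⟩ | ⟨h, h'⟩
        · exact h
        · have d1 := hP2 u₁ h1S h1ne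
          have d2 := hP2 u₂ h2S h2ne
          rw [h'] at d1
          rw [← h] at d2
          exfalso
          omega
    omega
  omega

end ThreeLow2

end VizingAux

namespace VizingAux

section Setup

variable [Fintype V] {G : SimpleGraph V}

lemma EC_iff_proper {k : ℕ} {c : Sym2 V → ℕ} :
    EC G.edgeSet k c ↔ IsProperEdgeColoring G k c := Iff.rfl

lemma sne {a b a' b' : V} (h1 : ¬(a = a' ∧ b = b')) (h2 : ¬(a = b' ∧ b = a')) :
    s(a,b) ≠ s(a',b') := by
  intro h
  rcases Sym2.eq_iff.1 h with ⟨h3, h4⟩ | ⟨h3, h4⟩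
  · exact h1 ⟨h3, h4⟩
  · exact h2 ⟨h3, h4⟩

lemma exists_proper {W : Type*} [Finite W] (G' : SimpleGraph W) :
    ∃ n c, IsProperEdgeColoring G' n c := by
  have : Finite (Sym2 W) := by infer_instance
  refine ⟨Nat.card (Sym2 W), fun e => (Finite.equivFin (Sym2 W) e).val, ?_, ?_⟩
  · intro e _
    exact (Finite.equivFin (Sym2 W) e).isLt
  · intro e₁ _ e₂ _ hne _
    intro h
    exact hne ((Finite.equivFin (Sym2 W)).injective (Fin.val_injective h))

lemma chromSet_nonempty {W : Type*} [Finite W] (G' : SimpleGraph W) :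
    {n | ∃ c, IsProperEdgeColoring G' n c}.Nonempty := by
  obtain ⟨n, c, h⟩ := exists_proper G'
  exact ⟨n, c, h⟩

lemma proper_mono {W : Type*} {G' : SimpleGraph W} {n m : ℕ} {c : Sym2 W → ℕ}
    (hnm : n ≤ m) (h : IsProperEdgeColoring G' n c) : IsProperEdgeColoring G' m c :=
  ⟨fun e he => lt_of_lt_of_le (h.1 e he) hnm, h.2⟩

lemma deg_le_of_proper {n : ℕ} {c : Sym2 V → ℕ} (h : IsProperEdgeColoring G n c) (v : V) :
    deg G v ≤ n := by
  have himg : ((fun z => c s(v,z)) '' G.neighborSet v).ncard = (G.neighborSet v).ncard := by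
    refine Set.ncard_image_of_injOn ?_
    intro z₁ h₁ z₂ h₂ hcc
    by_contra hne
    have he : s(v,z₁) ≠ s(v,z₂) := by
      refine sne ?_ ?_
      · rintro ⟨-, h⟩; exact hne h
      · rintro ⟨rfl, rfl⟩; exact G.irrefl h₁
    exact h.2 _ ((G.mem_edgeSet).2 h₁) _ ((G.mem_edgeSet).2 h₂) he
      ⟨v, Sym2.mem_mk_left _ _, Sym2.mem_mk_left _ _⟩ hcc
  have hsub : (fun z => c s(v,z)) '' G.neighborSet v ⊆ Set.Iio n := by
    rintro a ⟨z, hz, rfl⟩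
    exact h.1 _ ((G.mem_edgeSet).2 hz)
  have := Set.ncard_le_ncard hsub (Set.finite_Iio n)
  rw [himg, ncard_Iio] at this
  exact this

lemma maxDeg_attained (v : V) : ∃ v₀, deg G v₀ = maxDeg G := by
  have hne : {d | ∃ w, deg G w = d}.Nonempty := ⟨deg G v, v, rfl⟩
  have hbdd : BddAbove {d | ∃ w, deg G w = d} := by
    have : {d | ∃ w, deg G w = d} = Set.range (deg G) := by
      ext d; constructor
      · rintro ⟨w, rfl⟩; exact ⟨w, rfl⟩
      · rintro ⟨w, rfl⟩; exact ⟨w, rfl⟩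
    rw [this]
    exact (Set.finite_range _).bddAbove
  exact Nat.sSup_mem hne hbdd

lemma deg_le_maxDeg (v : V) : deg G v ≤ maxDeg G := by
  have hbdd : BddAbove {d | ∃ w, deg G w = d} := by
    have : {d | ∃ w, deg G w = d} = Set.range (deg G) := by
      ext d; constructor
      · rintro ⟨w, rfl⟩; exact ⟨w, rfl⟩
      · rintro ⟨w, rfl⟩; exact ⟨w, rfl⟩
    rw [this]
    exact (Set.finite_range _).bddAbove
  exact le_csSup hbdd ⟨v, rfl⟩

lemma maxDeg_le_chrom (v : V) : maxDeg G ≤ edgeChromaticNumber G := by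
  obtain ⟨v₀, hv₀⟩ := maxDeg_attained (G := G) v
  refine le_csInf (chromSet_nonempty G) ?_
  rintro n ⟨c, hc⟩
  rw [← hv₀]
  exact deg_le_of_proper hc v₀

/-- the subgraph of `G` obtained by deleting the edge `f` -/
def Hdel (G : SimpleGraph V) (f : Sym2 V) : G.Subgraph where
  verts := Set.univ
  Adj a b := G.Adj a b ∧ s(a,b) ≠ f
  adj_sub h := h.1
  edge_vert _ := Set.mem_univ _
  symm := by
    constructor
    intro a b ⟨h1, h2⟩
    refine ⟨h1.symm, ?_⟩
    rwa [Sym2.eq_swap]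

lemma Hdel_ne_top {f : Sym2 V} (hf : f ∈ G.edgeSet) : Hdel G f ≠ ⊤ := by
  induction f with
  | _ a b =>
    intro h
    have hadj : G.Adj a b := (G.mem_edgeSet).1 hf
    have h2 : (Hdel G s(a,b)).Adj a b := by
      rw [h]
      simpa using hadj
    exact h2.2 rfl

lemma transfer {f : Sym2 V} (hf : f ∈ G.edgeSet) {n : ℕ}
    (hn : ∃ c', IsProperEdgeColoring (Hdel G f).coe n c') :
    ∃ c, EC (G.edgeSet \ {f}) n c := by
  obtain ⟨c', hc'⟩ := hn
  set ι : V → ↥(Hdel G f).verts := fun v => ⟨v, Set.mem_univ v⟩ with hι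
  have hιinj : Function.Injective ι := fun a b h => congrArg Subtype.val h
  refine ⟨fun e => c' (Sym2.map ι e), ?_, ?_⟩
  · intro e he
    induction e with
    | _ a b =>
      refine hc'.1 _ ?_
      rw [Sym2.map_pair_eq, SimpleGraph.mem_edgeSet, SimpleGraph.Subgraph.coe_adj]
      exact ⟨(G.mem_edgeSet).1 he.1, he.2⟩
  · intro e₁ h₁ e₂ h₂ hne ⟨v, hv₁, hv₂⟩
    have he₁ : Sym2.map ι e₁ ∈ (Hdel G f).coe.edgeSet := by
      induction e₁ with
      | _ a b =>
        rw [Sym2.map_pair_eq, SimpleGraph.mem_edgeSet, SimpleGraph.Subgraph.coe_adj]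
        exact ⟨(G.mem_edgeSet).1 h₁.1, h₁.2⟩
    have he₂ : Sym2.map ι e₂ ∈ (Hdel G f).coe.edgeSet := by
      induction e₂ with
      | _ a b =>
        rw [Sym2.map_pair_eq, SimpleGraph.mem_edgeSet, SimpleGraph.Subgraph.coe_adj]
        exact ⟨(G.mem_edgeSet).1 h₂.1, h₂.2⟩
    refine hc'.2 _ he₁ _ he₂ ?_ ?_
    · intro h
      exact hne (Sym2.map.injective hιinj h)
    · exact ⟨ι v, Sym2.mem_map.2 ⟨v, hv₁, rfl⟩, Sym2.mem_map.2 ⟨v, hv₂, rfl⟩⟩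

end Setup

end VizingAux

namespace VizingAux

section Crit

variable [Fintype V] {G : SimpleGraph V} {x y : V}

lemma chrom_succ (hG : IsCritical G) (hxy : G.Adj x y)
    (hd : deg G x + deg G y = maxDeg G + 2) :
    edgeChromaticNumber G = maxDeg G + 1 := by
  set k := maxDeg G with hk
  have hge : k + 1 ≤ edgeChromaticNumber G := by
    have h1 : k ≤ edgeChromaticNumber G := maxDeg_le_chrom x
    have h2 : edgeChromaticNumber G ≠ k := hG.1
    omega
  set k' := edgeChromaticNumber G - 1 with hk'
  have hk'ge : k ≤ k' := by omega
  have hxyE : s(x,y) ∈ G.edgeSet := hxy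
  have hlt : edgeChromaticNumber (Hdel G s(x,y)).coe < edgeChromaticNumber G :=
    hG.2 _ (Hdel_ne_top hxyE)
  obtain ⟨c', hc'⟩ : ∃ c', IsProperEdgeColoring (Hdel G s(x,y)).coe
      (edgeChromaticNumber (Hdel G s(x,y)).coe) c' :=
    Nat.sInf_mem (chromSet_nonempty (Hdel G s(x,y)).coe)
  have hpad : IsProperEdgeColoring (Hdel G s(x,y)).coe k' c' :=
    proper_mono (by omega) hc'
  obtain ⟨c, hc⟩ := transfer hxyE ⟨c', hpad⟩
  have hdisj : ∀ ρ, ρ ∈ miss (G.edgeSet \ {s(x,y)}) k' c x →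
      ρ ∈ miss (G.edgeSet \ {s(x,y)}) k' c y → False := by
    intro ρ h1 h2
    have hext := EC_extend hc (by simp) h1 h2
    rw [Set.insert_diff_singleton, Set.insert_eq_self.2 hxyE] at hext
    have : edgeChromaticNumber G ≤ k' := Nat.sInf_le ⟨_, hext⟩
    omega
  have hcx := count_miss hc x
  rw [ncard_inc_minus_mem G hxyE (Sym2.mem_mk_left x y)] at hcx
  have hcy := count_miss hc y
  rw [ncard_inc_minus_mem G hxyE (Sym2.mem_mk_right x y)] at hcy
  have hsubx : miss (G.edgeSet \ {s(x,y)}) k' c x ⊆ Set.Iio k' := fun a ha => ha.1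
  have hsuby : miss (G.edgeSet \ {s(x,y)}) k' c y ⊆ Set.Iio k' := fun a ha => ha.1
  have hfinx := (Set.finite_Iio k').subset hsubx
  have hfiny := (Set.finite_Iio k').subset hsuby
  have hun : (miss (G.edgeSet \ {s(x,y)}) k' c x ∪ miss (G.edgeSet \ {s(x,y)}) k' c y).ncard
      = (miss (G.edgeSet \ {s(x,y)}) k' c x).ncard
        + (miss (G.edgeSet \ {s(x,y)}) k' c y).ncard := by
    refine Set.ncard_union_eq ?_ hfinx hfiny
    rw [Set.disjoint_left]
    exact fun a ha hb => hdisj a ha hb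
  have hle : (miss (G.edgeSet \ {s(x,y)}) k' c x ∪ miss (G.edgeSet \ {s(x,y)}) k' c y).ncard
      ≤ k' := by
    have := Set.ncard_le_ncard (Set.union_subset hsubx hsuby) (Set.finite_Iio k')
    rwa [ncard_Iio] at this
  have hdx : deg G x ≤ k := deg_le_maxDeg x
  have hdy : deg G y ≤ k := deg_le_maxDeg y
  omega

lemma no_k (hG : IsCritical G) (hxy : G.Adj x y)
    (hd : deg G x + deg G y = maxDeg G + 2) :
    ∀ c, ¬ EC G.edgeSet (maxDeg G) c := by
  intro c hc
  have h1 : edgeChromaticNumber G ≤ maxDeg G := Nat.sInf_le ⟨c, hc⟩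
  have h2 := chrom_succ hG hxy hd
  omega

lemma kill_common (hG : IsCritical G) (hxy : G.Adj x y)
    (hd : deg G x + deg G y = maxDeg G + 2) {p q : V} (hpq : s(p,q) ∈ G.edgeSet)
    {c : Sym2 V → ℕ} (hc : EC (G.edgeSet \ {s(p,q)}) (maxDeg G) c) {a : ℕ}
    (hp : a ∈ miss (G.edgeSet \ {s(p,q)}) (maxDeg G) c p)
    (hq : a ∈ miss (G.edgeSet \ {s(p,q)}) (maxDeg G) c q) : False := by
  have hext := EC_extend hc (by simp) hp hq
  rw [Set.insert_diff_singleton, Set.insert_eq_self.2 hpq] at hext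
  exact no_k hG hxy hd _ hext

lemma exists_del (hG : IsCritical G) (hxy : G.Adj x y)
    (hd : deg G x + deg G y = maxDeg G + 2) {f : Sym2 V} (hf : f ∈ G.edgeSet) :
    ∃ c, EC (G.edgeSet \ {f}) (maxDeg G) c := by
  have hlt : edgeChromaticNumber (Hdel G f).coe < edgeChromaticNumber G :=
    hG.2 _ (Hdel_ne_top hf)
  rw [chrom_succ hG hxy hd] at hlt
  obtain ⟨c', hc'⟩ : ∃ c', IsProperEdgeColoring (Hdel G f).coe
      (edgeChromaticNumber (Hdel G f).coe) c' :=
    Nat.sInf_mem (chromSet_nonempty (Hdel G f).coe)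
  exact transfer hf ⟨c', proper_mono (by omega) hc'⟩

lemma L2 (hG : IsCritical G) (hxy : G.Adj x y)
    (hd : deg G x + deg G y = maxDeg G + 2) {p q : V} (hpq : s(p,q) ∈ G.edgeSet)
    {c : Sym2 V → ℕ} (hc : EC (G.edgeSet \ {s(p,q)}) (maxDeg G) c) {α θ : ℕ}
    (hα : α ∈ miss (G.edgeSet \ {s(p,q)}) (maxDeg G) c p)
    (hθ : θ ∈ miss (G.edgeSet \ {s(p,q)}) (maxDeg G) c q) (hαθ : α ≠ θ) :
    q ∈ comp (G.edgeSet \ {s(p,q)}) c α θ p := by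
  by_contra hq
  by_cases hθp : θ ∈ miss (G.edgeSet \ {s(p,q)}) (maxDeg G) c p
  · exact kill_common hG hxy hd hpq hc hθp hθ
  · set c₂ := kswap (G.edgeSet \ {s(p,q)}) c α θ p with hc₂def
    have hc₂ : EC (G.edgeSet \ {s(p,q)}) (maxDeg G) c₂ := EC_kswap hc hαθ hα.1 hθ.1 p
    have hθp₂ : θ ∈ miss (G.edgeSet \ {s(p,q)}) (maxDeg G) c₂ p := by
      rw [hc₂def, kswap_miss_mem hαθ hα.1 hθ.1 (mem_comp_self p), flipc_right hαθ]
      exact hα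
    have hθq₂ : θ ∈ miss (G.edgeSet \ {s(p,q)}) (maxDeg G) c₂ q := by
      rw [hc₂def, kswap_miss_not_mem hq]
      exact hθ
    exact kill_common hG hxy hd hpq hc₂ hθp₂ hθq₂

/-- the missing sets at `x` and `y` partition the colors -/
lemma partition (hG : IsCritical G) (hxy : G.Adj x y)
    (hd : deg G x + deg G y = maxDeg G + 2)
    {c : Sym2 V → ℕ} (hc : EC (G.edgeSet \ {s(x,y)}) (maxDeg G) c) :
    ∀ ρ < maxDeg G, ρ ∈ miss (G.edgeSet \ {s(x,y)}) (maxDeg G) c x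
      ∨ ρ ∈ miss (G.edgeSet \ {s(x,y)}) (maxDeg G) c y := by
  set k := maxDeg G with hk
  have hxyE : s(x,y) ∈ G.edgeSet := hxy
  have hcx := count_miss hc x
  rw [ncard_inc_minus_mem G hxyE (Sym2.mem_mk_left x y)] at hcx
  have hcy := count_miss hc y
  rw [ncard_inc_minus_mem G hxyE (Sym2.mem_mk_right x y)] at hcy
  have hsubx : miss (G.edgeSet \ {s(x,y)}) k c x ⊆ Set.Iio k := fun a ha => ha.1
  have hsuby : miss (G.edgeSet \ {s(x,y)}) k c y ⊆ Set.Iio k := fun a ha => ha.1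
  have hfinx := (Set.finite_Iio k).subset hsubx
  have hfiny := (Set.finite_Iio k).subset hsuby
  have hun : (miss (G.edgeSet \ {s(x,y)}) k c x ∪ miss (G.edgeSet \ {s(x,y)}) k c y).ncard
      = (miss (G.edgeSet \ {s(x,y)}) k c x).ncard
        + (miss (G.edgeSet \ {s(x,y)}) k c y).ncard := by
    refine Set.ncard_union_eq ?_ hfinx hfiny
    rw [Set.disjoint_left]
    exact fun a ha hb => kill_common hG hxy hd hxyE hc ha hb
  have hdx : deg G x ≤ k := deg_le_maxDeg x
  have hdy : deg G y ≤ k := deg_le_maxDeg y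
  have heq : miss (G.edgeSet \ {s(x,y)}) k c x ∪ miss (G.edgeSet \ {s(x,y)}) k c y
      = Set.Iio k := by
    refine Set.eq_of_subset_of_ncard_le (Set.union_subset hsubx hsuby) ?_ (Set.finite_Iio k)
    rw [ncard_Iio, hun]
    omega
  intro ρ hρ
  have : ρ ∈ Set.Iio k := hρ
  rw [← heq] at this
  exact this

end Crit

end VizingAux

namespace VizingAux

section ClaimA

variable [Fintype V] {G : SimpleGraph V} {x y : V}

/-- Claim (a): each neighbor `w ≠ y` of `x` has degree `Δ` -/
lemma claimA (hG : IsCritical G) (hxy : G.Adj x y)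
    (hd : deg G x + deg G y = maxDeg G + 2) {w : V} (hxw : G.Adj x w) (hwy : w ≠ y) :
    maxDeg G ≤ deg G w := by
  by_contra hlt
  push_neg at hlt
  have hxyE : s(x,y) ∈ G.edgeSet := hxy
  obtain ⟨c, hc⟩ := exists_del hG hxy hd hxyE
  have hpart := partition hG hxy hd hc
  have hxwD : s(x,w) ∈ G.edgeSet \ {s(x,y)} := by
    refine ⟨hxw, ?_⟩
    simp only [Set.mem_singleton_iff]
    exact sne (fun h => hwy h.2) (fun h => hxy.ne h.1)
  have hyxw : y ∉ s(x,w) := by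
    rw [Sym2.mem_iff]
    rintro (rfl | rfl)
    · exact hxy.ne rfl
    · exact hwy rfl
  have hβx : c s(x,w) ∉ miss (G.edgeSet \ {s(x,y)}) (maxDeg G) c x :=
    not_miss_of_edge hxwD (Sym2.mem_mk_left x w)
  have hβw : c s(x,w) ∉ miss (G.edgeSet \ {s(x,y)}) (maxDeg G) c w :=
    not_miss_of_edge hxwD (Sym2.mem_mk_right x w)
  have hβk : c s(x,w) < maxDeg G := hc.1 _ hxwD
  have hβy : c s(x,w) ∈ miss (G.edgeSet \ {s(x,y)}) (maxDeg G) c y :=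
    (hpart _ hβk).resolve_left hβx
  -- missing set of w is nonempty
  have hcw := count_miss hc w
  rw [ncard_inc_minus_not_mem G (by
    rw [Sym2.mem_iff]
    rintro (rfl | rfl)
    · exact hxw.ne rfl
    · exact hwy rfl)] at hcw
  obtain ⟨γ₁, hγ₁⟩ : (miss (G.edgeSet \ {s(x,y)}) (maxDeg G) c w).Nonempty :=
    Set.nonempty_of_ncard_ne_zero (by omega)
  by_cases hA : ∃ γ₀, γ₀ ∈ miss (G.edgeSet \ {s(x,y)}) (maxDeg G) c w ∧
      γ₀ ∈ miss (G.edgeSet \ {s(x,y)}) (maxDeg G) c x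
  · obtain ⟨γ₀, hγw, hγx⟩ := hA
    have hβγ : c s(x,w) ≠ γ₀ := fun h => hβw (h ▸ hγw)
    have hc₂ := EC_recolor hc hxwD hγx hγw
    have hβx₂ : c s(x,w) ∈ miss (G.edgeSet \ {s(x,y)}) (maxDeg G) (upd c s(x,w) γ₀) x :=
      (miss_recolor_endpoint hc hxwD (Sym2.mem_mk_left x w)).2 ⟨hβγ, Or.inl rfl⟩
    have hβy₂ : c s(x,w) ∈ miss (G.edgeSet \ {s(x,y)}) (maxDeg G) (upd c s(x,w) γ₀) y :=
      (miss_recolor_far hyxw).2 hβy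
    exact kill_common hG hxy hd hxyE hc₂ hβx₂ hβy₂
  · push_neg at hA
    have hγ₁x : γ₁ ∉ miss (G.edgeSet \ {s(x,y)}) (maxDeg G) c x := hA γ₁ hγ₁
    have hγ₁y : γ₁ ∈ miss (G.edgeSet \ {s(x,y)}) (maxDeg G) c y :=
      (hpart γ₁ hγ₁.1).resolve_left hγ₁x
    -- α in the missing set of x
    have hcx := count_miss hc x
    rw [ncard_inc_minus_mem G hxyE (Sym2.mem_mk_left x y)] at hcx
    have hdx : deg G x ≤ maxDeg G := deg_le_maxDeg x
    have hdy : deg G y ≤ maxDeg G := deg_le_maxDeg y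
    obtain ⟨α, hα⟩ : (miss (G.edgeSet \ {s(x,y)}) (maxDeg G) c x).Nonempty :=
      Set.nonempty_of_ncard_ne_zero (by omega)
    have hαγ : α ≠ γ₁ := by
      rintro rfl
      exact kill_common hG hxy hd hxyE hc hα hγ₁y
    have hyS : y ∈ comp (G.edgeSet \ {s(x,y)}) c α γ₁ x :=
      L2 hG hxy hd hxyE hc hα hγ₁y hαγ
    have hwS : w ∉ comp (G.edgeSet \ {s(x,y)}) c α γ₁ x := by
      intro hw
      exact three_low hc (mem_comp_self x) hyS hw hxy.ne hxw.ne (fun h => hwy h.symm)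
        (Or.inl hα) (Or.inr hγ₁y) (Or.inr hγ₁)
    have hxcw : x ∉ comp (G.edgeSet \ {s(x,y)}) c α γ₁ w := by
      intro hxc
      exact hwS (comp_disjoint (mem_comp_self x) hxc (mem_comp_self w))
    have hycw : y ∉ comp (G.edgeSet \ {s(x,y)}) c α γ₁ w := by
      intro hyc
      exact hwS (comp_disjoint hyS hyc (mem_comp_self w))
    have hc₂ : EC (G.edgeSet \ {s(x,y)}) (maxDeg G) (kswap (G.edgeSet \ {s(x,y)}) c α γ₁ w) :=
      EC_kswap hc hαγ hα.1 hγ₁.1 w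
    have hαw₂ : α ∈ miss (G.edgeSet \ {s(x,y)}) (maxDeg G)
        (kswap (G.edgeSet \ {s(x,y)}) c α γ₁ w) w := by
      rw [kswap_miss_mem hαγ hα.1 hγ₁.1 (mem_comp_self w), flipc_left]
      exact hγ₁
    have hαx₂ : α ∈ miss (G.edgeSet \ {s(x,y)}) (maxDeg G)
        (kswap (G.edgeSet \ {s(x,y)}) c α γ₁ w) x := by
      rw [kswap_miss_not_mem hxcw]; exact hα
    have hβy₂ : c s(x,w) ∈ miss (G.edgeSet \ {s(x,y)}) (maxDeg G)
        (kswap (G.edgeSet \ {s(x,y)}) c α γ₁ w) y := by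
      rw [kswap_miss_not_mem hycw]; exact hβy
    have hcxw₂ : kswap (G.edgeSet \ {s(x,y)}) c α γ₁ w s(x,w) = c s(x,w) :=
      kswap_far (Sym2.mem_mk_left x w) hxcw
    have hc₃ := EC_recolor hc₂ hxwD hαx₂ hαw₂
    have hβα : c s(x,w) ≠ α := fun h => hβx (h ▸ hα)
    have hβx₃ : c s(x,w) ∈ miss (G.edgeSet \ {s(x,y)}) (maxDeg G)
        (upd (kswap (G.edgeSet \ {s(x,y)}) c α γ₁ w) s(x,w) α) x :=
      (miss_recolor_endpoint hc₂ hxwD (Sym2.mem_mk_left x w)).2 ⟨hβα, Or.inl hcxw₂.symm⟩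
    have hβy₃ : c s(x,w) ∈ miss (G.edgeSet \ {s(x,y)}) (maxDeg G)
        (upd (kswap (G.edgeSet \ {s(x,y)}) c α γ₁ w) s(x,w) α) y :=
      (miss_recolor_far hyxw).2 hβy₂
    exact kill_common hG hxy hd hxyE hc₃ hβx₃ hβy₃

end ClaimA

end VizingAux

namespace VizingAux

section CaseLemmas

variable [Fintype V] {G : SimpleGraph V} {x y : V}

/-- final common-ending: `σ` missing at both `x` and `y`, `w` misses exactly `γ`,
`γ` missing at `u`, with `xy` and `wu` both colored `β` -/
lemma caseEnd (hG : IsCritical G) (hxy : G.Adj x y)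
    (hd : deg G x + deg G y = maxDeg G + 2) {w u : V}
    (hxw : G.Adj x w) (hwy : w ≠ y) (hwu : G.Adj w u) (hux : u ≠ x) (huy : u ≠ y)
    {c : Sym2 V → ℕ} (hc : EC (G.edgeSet \ {s(x,w)}) (maxDeg G) c) {σ γ β : ℕ}
    (hσx : σ ∈ miss (G.edgeSet \ {s(x,w)}) (maxDeg G) c x)
    (hσy : σ ∈ miss (G.edgeSet \ {s(x,w)}) (maxDeg G) c y)
    (hw : ∀ ρ, ρ ∈ miss (G.edgeSet \ {s(x,w)}) (maxDeg G) c w ↔ ρ = γ)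
    (hγu : γ ∈ miss (G.edgeSet \ {s(x,w)}) (maxDeg G) c u)
    (hcxy : c s(x,y) = β) (hcwu : c s(w,u) = β)
    (hβσ : β ≠ σ) (hβγ : β ≠ γ) : False := by
  have hxwE : s(x,w) ∈ G.edgeSet := hxw
  have hxyD : s(x,y) ∈ G.edgeSet \ {s(x,w)} := by
    refine ⟨hxy, ?_⟩
    simp only [Set.mem_singleton_iff]
    exact sne (fun h => hwy h.2.symm) (fun h => hxw.ne h.1)
  have hwuD : s(w,u) ∈ G.edgeSet \ {s(x,w)} := by
    refine ⟨hwu, ?_⟩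
    simp only [Set.mem_singleton_iff]
    exact sne (fun h => hxw.ne h.1.symm) (fun h => hux h.2)
  have hwxy : w ∉ s(x,y) := by
    rw [Sym2.mem_iff]
    rintro (rfl | rfl)
    · exact hxw.ne rfl
    · exact hwy rfl
  have huxy : u ∉ s(x,y) := by
    rw [Sym2.mem_iff]
    rintro (rfl | rfl)
    · exact hux rfl
    · exact huy rfl
  have hxwu : x ∉ s(w,u) := by
    rw [Sym2.mem_iff]
    rintro (rfl | rfl)
    · exact hxw.ne rfl
    · exact hux rfl
  have hwuxy : s(w,u) ≠ s(x,y) := by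
    intro h
    exact hwxy (h ▸ Sym2.mem_mk_left w u)
  -- recolor xy := σ
  have hc₂ := EC_recolor hc hxyD hσx hσy
  have hβx₂ : β ∈ miss (G.edgeSet \ {s(x,w)}) (maxDeg G) (upd c s(x,y) σ) x :=
    (miss_recolor_endpoint hc hxyD (Sym2.mem_mk_left x y)).2 ⟨hβσ, Or.inl hcxy.symm⟩
  have hγw₂ : γ ∈ miss (G.edgeSet \ {s(x,w)}) (maxDeg G) (upd c s(x,y) σ) w :=
    (miss_recolor_far hwxy).2 ((hw γ).2 rfl)
  have hγu₂ : γ ∈ miss (G.edgeSet \ {s(x,w)}) (maxDeg G) (upd c s(x,y) σ) u :=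
    (miss_recolor_far huxy).2 hγu
  have hcwu₂ : upd c s(x,y) σ s(w,u) = β := by
    rw [upd_other hwuxy]; exact hcwu
  -- recolor wu := γ
  have hc₃ := EC_recolor hc₂ hwuD hγw₂ hγu₂
  have hβw₃ : β ∈ miss (G.edgeSet \ {s(x,w)}) (maxDeg G)
      (upd (upd c s(x,y) σ) s(w,u) γ) w :=
    (miss_recolor_endpoint hc₂ hwuD (Sym2.mem_mk_left w u)).2 ⟨hβγ, Or.inl hcwu₂.symm⟩
  have hβx₃ : β ∈ miss (G.edgeSet \ {s(x,w)}) (maxDeg G)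
      (upd (upd c s(x,y) σ) s(w,u) γ) x :=
    (miss_recolor_far hxwu).2 hβx₂
  exact kill_common hG hxy hd hxwE hc₃ hβx₃ hβw₃

/-- case where `u` misses a color `ε` missing at `x` as well -/
lemma caseA (hG : IsCritical G) (hxy : G.Adj x y)
    (hd : deg G x + deg G y = maxDeg G + 2) {w u : V}
    (hxw : G.Adj x w) (hwy : w ≠ y) (hwu : G.Adj w u) (hux : u ≠ x) (huy : u ≠ y)
    {c : Sym2 V → ℕ} (hc : EC (G.edgeSet \ {s(x,w)}) (maxDeg G) c) {ε γ β : ℕ}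
    (hw : ∀ ρ, ρ ∈ miss (G.edgeSet \ {s(x,w)}) (maxDeg G) c w ↔ ρ = γ)
    (hεx : ε ∈ miss (G.edgeSet \ {s(x,w)}) (maxDeg G) c x)
    (hγy : γ ∈ miss (G.edgeSet \ {s(x,w)}) (maxDeg G) c y)
    (hεu : ε ∈ miss (G.edgeSet \ {s(x,w)}) (maxDeg G) c u)
    (hγu : γ ∈ miss (G.edgeSet \ {s(x,w)}) (maxDeg G) c u)
    (hcxy : c s(x,y) = β) (hcwu : c s(w,u) = β)
    (hβγ : β ≠ γ) (hβε : β ≠ ε) (hεγ : ε ≠ γ) : False := by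
  have hxwE : s(x,w) ∈ G.edgeSet := hxw
  have hγw : γ ∈ miss (G.edgeSet \ {s(x,w)}) (maxDeg G) c w := (hw γ).2 rfl
  have hwS : w ∈ comp (G.edgeSet \ {s(x,w)}) c ε γ x :=
    L2 hG hxy hd hxwE hc hεx hγw hεγ
  have hyS : y ∉ comp (G.edgeSet \ {s(x,w)}) c ε γ x := by
    intro hy
    exact three_low hc (mem_comp_self x) hwS hy hxw.ne hxy.ne hwy
      (Or.inl hεx) (Or.inr hγw) (Or.inr hγy)
  have huS : u ∉ comp (G.edgeSet \ {s(x,w)}) c ε γ x := by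
    intro hu
    exact three_low hc (mem_comp_self x) hwS hu hxw.ne hux.symm hwu.ne
      (Or.inl hεx) (Or.inr hγw) (Or.inl hεu)
  have hc₂ : EC (G.edgeSet \ {s(x,w)}) (maxDeg G)
      (kswap (G.edgeSet \ {s(x,w)}) c ε γ x) := EC_kswap hc hεγ hεx.1 hγw.1 x
  have hγx₂ : γ ∈ miss (G.edgeSet \ {s(x,w)}) (maxDeg G)
      (kswap (G.edgeSet \ {s(x,w)}) c ε γ x) x := by
    rw [kswap_miss_mem hεγ hεx.1 hγw.1 (mem_comp_self x), flipc_right hεγ]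
    exact hεx
  have hw₂ : ∀ ρ, ρ ∈ miss (G.edgeSet \ {s(x,w)}) (maxDeg G)
      (kswap (G.edgeSet \ {s(x,w)}) c ε γ x) w ↔ ρ = ε := by
    intro ρ
    rw [kswap_miss_mem hεγ hεx.1 hγw.1 hwS, hw (flipc ε γ ρ), flipc_eq_snd_iff hεγ]
  have hγy₂ : γ ∈ miss (G.edgeSet \ {s(x,w)}) (maxDeg G)
      (kswap (G.edgeSet \ {s(x,w)}) c ε γ x) y := by
    rw [kswap_miss_not_mem hyS]; exact hγy
  have hεu₂ : ε ∈ miss (G.edgeSet \ {s(x,w)}) (maxDeg G)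
      (kswap (G.edgeSet \ {s(x,w)}) c ε γ x) u := by
    rw [kswap_miss_not_mem huS]; exact hεu
  have hcxy₂ : kswap (G.edgeSet \ {s(x,w)}) c ε γ x s(x,y) = β := by
    rw [kswap_not_kedge (by rw [hcxy]; exact hβε) (by rw [hcxy]; exact hβγ)]
    exact hcxy
  have hcwu₂ : kswap (G.edgeSet \ {s(x,w)}) c ε γ x s(w,u) = β := by
    rw [kswap_not_kedge (by rw [hcwu]; exact hβε) (by rw [hcwu]; exact hβγ)]
    exact hcwu
  exact caseEnd hG hxy hd hxw hwy hwu hux huy hc₂ hγx₂ hγy₂ hw₂ hεu₂ hcxy₂ hcwu₂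
    hβγ hβε

end CaseLemmas

end VizingAux

namespace VizingAux

section ClaimB

variable [Fintype V] {G : SimpleGraph V} {x y : V}

lemma claimB (hG : IsCritical G) (hxy : G.Adj x y)
    (hd : deg G x + deg G y = maxDeg G + 2) {w u : V} (hxw : G.Adj x w) (hwy : w ≠ y)
    (hwu : G.Adj w u) (hux : u ≠ x) (huy : u ≠ y) :
    maxDeg G ≤ deg G u + 1 := by
  by_contra hlt
  push_neg at hlt
  have hdu2 : deg G u + 2 ≤ maxDeg G := by omega
  have hdw : deg G w = maxDeg G :=
    le_antisymm (deg_le_maxDeg w) (claimA hG hxy hd hxw hwy)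
  -- basic distinctness and memberships
  have hxyne : x ≠ y := hxy.ne
  have hxwne : x ≠ w := hxw.ne
  have hwune : w ≠ u := hwu.ne
  have hxyE : s(x,y) ∈ G.edgeSet := hxy
  have hxwE : s(x,w) ∈ G.edgeSet := hxw
  have hwuE : s(w,u) ∈ G.edgeSet := hwu
  have hxwD : s(x,w) ∈ G.edgeSet \ {s(x,y)} := by
    refine ⟨hxw, ?_⟩
    simp only [Set.mem_singleton_iff]
    exact sne (fun h => hwy h.2) (fun h => hxyne h.1)
  have hwuD : s(w,u) ∈ G.edgeSet \ {s(x,y)} := by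
    refine ⟨hwu, ?_⟩
    simp only [Set.mem_singleton_iff]
    exact sne (fun h => hxwne h.1.symm) (fun h => hwy h.1)
  have hwuD' : s(w,u) ∈ G.edgeSet \ {s(x,w)} := by
    refine ⟨hwu, ?_⟩
    simp only [Set.mem_singleton_iff]
    exact sne (fun h => hxwne h.1.symm) (fun h => hux h.2)
  have hxyD' : s(x,y) ∈ G.edgeSet \ {s(x,w)} := by
    refine ⟨hxy, ?_⟩
    simp only [Set.mem_singleton_iff]
    exact sne (fun h => hwy h.2.symm) (fun h => hxwne h.1)
  have hwnotxy : w ∉ s(x,y) := by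
    rw [Sym2.mem_iff]; rintro (rfl | rfl)
    · exact hxwne rfl
    · exact hwy rfl
  have hunotxy : u ∉ s(x,y) := by
    rw [Sym2.mem_iff]; rintro (rfl | rfl)
    · exact hux rfl
    · exact huy rfl
  have hunotxw : u ∉ s(x,w) := by
    rw [Sym2.mem_iff]; rintro (rfl | rfl)
    · exact hux rfl
    · exact hwune rfl
  have hynotxw : y ∉ s(x,w) := by
    rw [Sym2.mem_iff]; rintro (rfl | rfl)
    · exact hxyne rfl
    · exact hwy rfl
  have hxnotwu : x ∉ s(w,u) := by
    rw [Sym2.mem_iff]; rintro (rfl | rfl)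
    · exact hxwne rfl
    · exact hux rfl
  have hynotwu : y ∉ s(w,u) := by
    rw [Sym2.mem_iff]; rintro (rfl | rfl)
    · exact hwy rfl
    · exact huy rfl
  have hwnotxw : w ∉ s(x,y) := hwnotxy
  have hdxk : deg G x ≤ maxDeg G := deg_le_maxDeg x
  have hdyk : deg G y ≤ maxDeg G := deg_le_maxDeg y
  -- STEP 1 : a coloring of G - xy where u and x share a missing color
  obtain ⟨c, hc, δ, hδx, hδu⟩ : ∃ c, EC (G.edgeSet \ {s(x,y)}) (maxDeg G) c ∧
      ∃ δ, δ ∈ miss (G.edgeSet \ {s(x,y)}) (maxDeg G) c x ∧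
        δ ∈ miss (G.edgeSet \ {s(x,y)}) (maxDeg G) c u := by
    obtain ⟨c₀, hc₀⟩ := exists_del hG hxy hd hxyE
    by_cases hA0 : ∃ δ, δ ∈ miss (G.edgeSet \ {s(x,y)}) (maxDeg G) c₀ x ∧
        δ ∈ miss (G.edgeSet \ {s(x,y)}) (maxDeg G) c₀ u
    · obtain ⟨δ, h1, h2⟩ := hA0
      exact ⟨c₀, hc₀, δ, h1, h2⟩
    · push_neg at hA0
      have hcx := count_miss hc₀ x
      rw [ncard_inc_minus_mem G hxyE (Sym2.mem_mk_left x y)] at hcx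
      obtain ⟨α, hα⟩ : (miss (G.edgeSet \ {s(x,y)}) (maxDeg G) c₀ x).Nonempty :=
        Set.nonempty_of_ncard_ne_zero (by omega)
      have hcu := count_miss hc₀ u
      rw [ncard_inc_minus_not_mem G hunotxy] at hcu
      obtain ⟨δ, hδ⟩ : (miss (G.edgeSet \ {s(x,y)}) (maxDeg G) c₀ u).Nonempty :=
        Set.nonempty_of_ncard_ne_zero (by omega)
      have hδx0 : δ ∉ miss (G.edgeSet \ {s(x,y)}) (maxDeg G) c₀ x :=
        fun h => hA0 δ h hδ
      have hδy : δ ∈ miss (G.edgeSet \ {s(x,y)}) (maxDeg G) c₀ y :=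
        (partition hG hxy hd hc₀ δ hδ.1).resolve_left hδx0
      have hαδ : α ≠ δ := by
        rintro rfl; exact hδx0 hα
      have hyS : y ∈ comp (G.edgeSet \ {s(x,y)}) c₀ α δ x :=
        L2 hG hxy hd hxyE hc₀ hα hδy hαδ
      have huS : u ∉ comp (G.edgeSet \ {s(x,y)}) c₀ α δ x := by
        intro hu
        exact three_low hc₀ (mem_comp_self x) hyS hu hxyne hux.symm huy.symm
          (Or.inl hα) (Or.inr hδy) (Or.inr hδ)
      have hxcu : x ∉ comp (G.edgeSet \ {s(x,y)}) c₀ α δ u :=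
        fun h => huS (comp_disjoint (mem_comp_self x) h (mem_comp_self u))
      refine ⟨kswap (G.edgeSet \ {s(x,y)}) c₀ α δ u,
        EC_kswap hc₀ hαδ hα.1 hδ.1 u, α, ?_, ?_⟩
      · rw [kswap_miss_not_mem hxcu]; exact hα
      · rw [kswap_miss_mem hαδ hα.1 hδ.1 (mem_comp_self u), flipc_left]
        exact hδ
  -- facts about the base coloring
  have hpart := partition hG hxy hd hc
  have hβx : c s(x,w) ∉ miss (G.edgeSet \ {s(x,y)}) (maxDeg G) c x :=
    not_miss_of_edge hxwD (Sym2.mem_mk_left x w)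
  have hβk : c s(x,w) < maxDeg G := hc.1 _ hxwD
  have hβy : c s(x,w) ∈ miss (G.edgeSet \ {s(x,y)}) (maxDeg G) c y :=
    (hpart _ hβk).resolve_left hβx
  have hδβ : δ ≠ c s(x,w) := by
    rintro h; rw [h] at hδx; exact hβx hδx
  have hδy : δ ∉ miss (G.edgeSet \ {s(x,y)}) (maxDeg G) c y :=
    fun h => kill_common hG hxy hd hxyE hc hδx h
  have hγu : c s(w,u) ∉ miss (G.edgeSet \ {s(x,y)}) (maxDeg G) c u :=
    not_miss_of_edge hwuD (Sym2.mem_mk_right w u)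
  have hγδ : c s(w,u) ≠ δ := by
    rintro h; rw [h] at hγu; exact hγu hδu
  have hγβ : c s(w,u) ≠ c s(x,w) := by
    intro h
    have := edge_unique hc hwuD hxwD (Sym2.mem_mk_left w u) (Sym2.mem_mk_right x w) h
    rw [Sym2.eq_iff] at this
    rcases this with ⟨h1, -⟩ | ⟨-, h2⟩
    · exact hxwne h1.symm
    · exact hux h2
  have hγk : c s(w,u) < maxDeg G := hc.1 _ hwuD
  have hfullw : ∀ ρ, ρ ∉ miss (G.edgeSet \ {s(x,y)}) (maxDeg G) c w := by
    have hcw := count_miss hc w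
    rw [ncard_inc_minus_not_mem G hwnotxy] at hcw
    have h0 : (miss (G.edgeSet \ {s(x,y)}) (maxDeg G) c w).ncard = 0 := by omega
    have := Set.ncard_eq_zero (s := miss (G.edgeSet \ {s(x,y)}) (maxDeg G) c w)
      (hs := (Set.finite_Iio (maxDeg G)).subset (fun a ha => ha.1))
    rw [this] at h0
    intro ρ hρ
    rw [h0] at hρ
    exact hρ
  -- STEP 2 : rotate, uncolor xw, give xy the color of xw
  have hD0sub : (G.edgeSet \ {s(x,y)}) \ {s(x,w)} ⊆ G.edgeSet \ {s(x,y)} :=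
    Set.diff_subset
  have hc0 : EC ((G.edgeSet \ {s(x,y)}) \ {s(x,w)}) (maxDeg G) c := EC_mono_dom hD0sub hc
  have hβx0 : c s(x,w) ∈ miss ((G.edgeSet \ {s(x,y)}) \ {s(x,w)}) (maxDeg G) c x :=
    (miss_forget_endpoint hc hxwD (Sym2.mem_mk_left x w)).2 (Or.inl rfl)
  have hβy0 : c s(x,w) ∈ miss ((G.edgeSet \ {s(x,y)}) \ {s(x,w)}) (maxDeg G) c y :=
    miss_anti hD0sub y hβy
  have hxynot0 : s(x,y) ∉ (G.edgeSet \ {s(x,y)}) \ {s(x,w)} := fun h => h.1.2 rfl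
  have hins : insert s(x,y) ((G.edgeSet \ {s(x,y)}) \ {s(x,w)}) = G.edgeSet \ {s(x,w)} := by
    ext e
    simp only [Set.mem_insert_iff, Set.mem_diff, Set.mem_singleton_iff]
    constructor
    · rintro (rfl | ⟨⟨h1, h2⟩, h3⟩)
      · exact ⟨hxyE, sne (fun h => hwy h.2.symm) (fun h => hxwne h.1)⟩
      · exact ⟨h1, h3⟩
    · rintro ⟨h1, h2⟩
      by_cases h : e = s(x,y)
      · exact Or.inl h
      · exact Or.inr ⟨⟨h1, h⟩, h2⟩
  have hc₁ : EC (G.edgeSet \ {s(x,w)}) (maxDeg G) (upd c s(x,y) (c s(x,w))) := by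
    have h := EC_extend hc0 hxynot0 hβx0 hβy0
    rwa [hins] at h
  have hMx₁ : ∀ ρ, ρ ∈ miss (G.edgeSet \ {s(x,w)}) (maxDeg G) (upd c s(x,y) (c s(x,w))) x
      ↔ ρ ∈ miss (G.edgeSet \ {s(x,y)}) (maxDeg G) c x := by
    intro ρ
    rw [← hins, miss_extend_endpoint hxynot0 (Sym2.mem_mk_left x y)]
    constructor
    · rintro ⟨h1, h2⟩
      rcases (miss_forget_endpoint hc hxwD (Sym2.mem_mk_left x w)).1 h2 with h3 | h3
      · exact absurd h3 h1
      · exact h3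
    · intro h1
      exact ⟨fun hh => hβx (hh ▸ h1),
        (miss_forget_endpoint hc hxwD (Sym2.mem_mk_left x w)).2 (Or.inr h1)⟩
  have hMy₁ : ∀ ρ, ρ ∈ miss (G.edgeSet \ {s(x,w)}) (maxDeg G) (upd c s(x,y) (c s(x,w))) y
      ↔ (ρ ≠ c s(x,w) ∧ ρ ∈ miss (G.edgeSet \ {s(x,y)}) (maxDeg G) c y) := by
    intro ρ
    rw [← hins, miss_extend_endpoint hxynot0 (Sym2.mem_mk_right x y)]
    constructor
    · rintro ⟨h1, h2⟩
      exact ⟨h1, (miss_forget_far hynotxw).1 h2⟩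
    · rintro ⟨h1, h2⟩
      exact ⟨h1, (miss_forget_far hynotxw).2 h2⟩
  have hMw₁ : ∀ ρ, ρ ∈ miss (G.edgeSet \ {s(x,w)}) (maxDeg G) (upd c s(x,y) (c s(x,w))) w
      ↔ ρ = c s(x,w) := by
    intro ρ
    rw [← hins, miss_extend_far hwnotxy,
      miss_forget_endpoint hc hxwD (Sym2.mem_mk_right x w)]
    constructor
    · rintro (h | h)
      · exact h
      · exact absurd h (hfullw ρ)
    · intro h
      exact Or.inl h
  have hMu₁ : ∀ ρ, ρ ∈ miss (G.edgeSet \ {s(x,w)}) (maxDeg G) (upd c s(x,y) (c s(x,w))) u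
      ↔ ρ ∈ miss (G.edgeSet \ {s(x,y)}) (maxDeg G) c u := by
    intro ρ
    rw [← hins, miss_extend_far hunotxy, miss_forget_far hunotxw]
  have hxywu : s(w,u) ≠ s(x,y) := fun h => hwnotxy (h ▸ Sym2.mem_mk_left w u)
  have hcxy₁ : (upd c s(x,y) (c s(x,w))) s(x,y) = c s(x,w) := upd_self
  have hcwu₁ : (upd c s(x,y) (c s(x,w))) s(w,u) = c s(w,u) := upd_other hxywu
  -- STEP 3 : make u miss the color of xw
  obtain ⟨c₂, hc₂, hMx₂, hMy₂, hMw₂, hβu₂, hcxy₂, hcwu₂⟩ :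
      ∃ c₂, EC (G.edgeSet \ {s(x,w)}) (maxDeg G) c₂ ∧
        (∀ ρ, ρ ∈ miss (G.edgeSet \ {s(x,w)}) (maxDeg G) c₂ x
          ↔ ρ ∈ miss (G.edgeSet \ {s(x,y)}) (maxDeg G) c x) ∧
        (∀ ρ, ρ ≠ δ → ρ ≠ c s(x,w) →
          (ρ ∈ miss (G.edgeSet \ {s(x,w)}) (maxDeg G) c₂ y
            ↔ ρ ∈ miss (G.edgeSet \ {s(x,y)}) (maxDeg G) c y)) ∧
        (∀ ρ, ρ ∈ miss (G.edgeSet \ {s(x,w)}) (maxDeg G) c₂ w ↔ ρ = c s(x,w)) ∧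
        c s(x,w) ∈ miss (G.edgeSet \ {s(x,w)}) (maxDeg G) c₂ u ∧
        c₂ s(x,y) = c s(x,w) ∧ c₂ s(w,u) = c s(w,u) := by
    by_cases hβu : c s(x,w) ∈ miss (G.edgeSet \ {s(x,w)}) (maxDeg G)
        (upd c s(x,y) (c s(x,w))) u
    · refine ⟨_, hc₁, hMx₁, ?_, hMw₁, hβu, hcxy₁, hcwu₁⟩
      intro ρ h1 h2
      rw [hMy₁ ρ]
      exact ⟨fun h => h.2, fun h => ⟨h2, h⟩⟩
    · have hδx₁ : δ ∈ miss (G.edgeSet \ {s(x,w)}) (maxDeg G) (upd c s(x,y) (c s(x,w))) x :=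
        (hMx₁ δ).2 hδx
      have hδu₁ : δ ∈ miss (G.edgeSet \ {s(x,w)}) (maxDeg G) (upd c s(x,y) (c s(x,w))) u :=
        (hMu₁ δ).2 hδu
      have hβw₁ : c s(x,w) ∈ miss (G.edgeSet \ {s(x,w)}) (maxDeg G)
          (upd c s(x,y) (c s(x,w))) w := (hMw₁ _).2 rfl
      have hwS : w ∈ comp (G.edgeSet \ {s(x,w)}) (upd c s(x,y) (c s(x,w))) δ (c s(x,w)) x :=
        L2 hG hxy hd hxwE hc₁ hδx₁ hβw₁ hδβ
      have huS : u ∉ comp (G.edgeSet \ {s(x,w)}) (upd c s(x,y) (c s(x,w))) δ (c s(x,w)) x := by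
        intro hu
        exact three_low hc₁ (mem_comp_self x) hwS hu hxwne hux.symm hwune
          (Or.inl hδx₁) (Or.inr hβw₁) (Or.inl hδu₁)
      have hxcu : x ∉ comp (G.edgeSet \ {s(x,w)}) (upd c s(x,y) (c s(x,w))) δ (c s(x,w)) u :=
        fun h => huS (comp_disjoint (mem_comp_self x) h (mem_comp_self u))
      have hwcu : w ∉ comp (G.edgeSet \ {s(x,w)}) (upd c s(x,y) (c s(x,w))) δ (c s(x,w)) u :=
        fun h => huS (comp_disjoint hwS h (mem_comp_self u))
      refine ⟨kswap (G.edgeSet \ {s(x,w)}) (upd c s(x,y) (c s(x,w))) δ (c s(x,w)) u,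
        EC_kswap hc₁ hδβ hδx.1 hβk u, ?_, ?_, ?_, ?_, ?_, ?_⟩
      · intro ρ
        rw [kswap_miss_not_mem hxcu]
        exact hMx₁ ρ
      · intro ρ h1 h2
        by_cases hy : y ∈ comp (G.edgeSet \ {s(x,w)}) (upd c s(x,y) (c s(x,w))) δ (c s(x,w)) u
        · rw [kswap_miss_mem hδβ hδx.1 hβk hy, flipc_other h1 h2, hMy₁ ρ]
          exact ⟨fun h => h.2, fun h => ⟨h2, h⟩⟩
        · rw [kswap_miss_not_mem hy, hMy₁ ρ]
          exact ⟨fun h => h.2, fun h => ⟨h2, h⟩⟩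
      · intro ρ
        rw [kswap_miss_not_mem hwcu]
        exact hMw₁ ρ
      · rw [kswap_miss_mem hδβ hδx.1 hβk (mem_comp_self u), flipc_right hδβ]
        exact hδu₁
      · rw [kswap_far (Sym2.mem_mk_left x y) hxcu]
        exact hcxy₁
      · rw [kswap_not_kedge (by rw [hcwu₁]; exact hγδ) (by rw [hcwu₁]; exact hγβ)]
        exact hcwu₁
  -- STEP 4 : recolor wu with the color of xw
  have hβw₂ : c s(x,w) ∈ miss (G.edgeSet \ {s(x,w)}) (maxDeg G) c₂ w := (hMw₂ _).2 rfl
  have hc₃ : EC (G.edgeSet \ {s(x,w)}) (maxDeg G) (upd c₂ s(w,u) (c s(x,w))) :=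
    EC_recolor hc₂ hwuD' hβw₂ hβu₂
  have hMw₃ : ∀ ρ, ρ ∈ miss (G.edgeSet \ {s(x,w)}) (maxDeg G) (upd c₂ s(w,u) (c s(x,w))) w
      ↔ ρ = c s(w,u) := by
    intro ρ
    rw [miss_recolor_endpoint hc₂ hwuD' (Sym2.mem_mk_left w u), hcwu₂]
    constructor
    · rintro ⟨h1, (h2 | h2)⟩
      · exact h2
      · exact absurd ((hMw₂ ρ).1 h2) h1
    · rintro rfl
      exact ⟨hγβ, Or.inl rfl⟩
  have hγu₃ : c s(w,u) ∈ miss (G.edgeSet \ {s(x,w)}) (maxDeg G)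
      (upd c₂ s(w,u) (c s(x,w))) u := by
    rw [miss_recolor_endpoint hc₂ hwuD' (Sym2.mem_mk_right w u), hcwu₂]
    exact ⟨hγβ, Or.inl rfl⟩
  have hMx₃ : ∀ ρ, ρ ∈ miss (G.edgeSet \ {s(x,w)}) (maxDeg G) (upd c₂ s(w,u) (c s(x,w))) x
      ↔ ρ ∈ miss (G.edgeSet \ {s(x,y)}) (maxDeg G) c x := by
    intro ρ
    rw [miss_recolor_far hxnotwu]
    exact hMx₂ ρ
  have hMy₃ : ∀ ρ, ρ ≠ δ → ρ ≠ c s(x,w) →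
      (ρ ∈ miss (G.edgeSet \ {s(x,w)}) (maxDeg G) (upd c₂ s(w,u) (c s(x,w))) y
        ↔ ρ ∈ miss (G.edgeSet \ {s(x,y)}) (maxDeg G) c y) := by
    intro ρ h1 h2
    rw [miss_recolor_far hynotwu]
    exact hMy₂ ρ h1 h2
  have hcxy₃ : (upd c₂ s(w,u) (c s(x,w))) s(x,y) = c s(x,w) := by
    rw [upd_other (Ne.symm hxywu)]
    exact hcxy₂
  have hcwu₃ : (upd c₂ s(w,u) (c s(x,w))) s(w,u) = c s(x,w) := upd_self
  have hβnotu₃ : c s(x,w) ∉ miss (G.edgeSet \ {s(x,w)}) (maxDeg G)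
      (upd c₂ s(w,u) (c s(x,w))) u := by
    have h := not_miss_of_edge (k := maxDeg G) hwuD' (Sym2.mem_mk_right w u)
      (c := upd c₂ s(w,u) (c s(x,w)))
    rwa [hcwu₃] at h
  have hcu₃ := count_miss hc₃ u
  rw [ncard_inc_minus_not_mem G hunotxw] at hcu₃
  obtain ⟨ε, hεu₃, hεγ⟩ := Set.exists_ne_of_one_lt_ncard
    (s := miss (G.edgeSet \ {s(x,w)}) (maxDeg G) (upd c₂ s(w,u) (c s(x,w))) u)
    (by omega) (c s(w,u))
  have hεβ : ε ≠ c s(x,w) := fun h => hβnotu₃ (h ▸ hεu₃)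
  -- STEP 5 : the color of wu must be missing at y
  by_cases hγx : c s(w,u) ∈ miss (G.edgeSet \ {s(x,y)}) (maxDeg G) c x
  · exact kill_common hG hxy hd hxwE hc₃ ((hMx₃ _).2 hγx) ((hMw₃ _).2 rfl)
  have hγy : c s(w,u) ∈ miss (G.edgeSet \ {s(x,y)}) (maxDeg G) c y :=
    (hpart _ hγk).resolve_left hγx
  have hγy₃ : c s(w,u) ∈ miss (G.edgeSet \ {s(x,w)}) (maxDeg G)
      (upd c₂ s(w,u) (c s(x,w))) y := (hMy₃ _ hγδ hγβ).2 hγy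
  -- STEP 6 : case analysis on the second missing color of u
  by_cases hUA : ∃ ρ, ρ ∈ miss (G.edgeSet \ {s(x,w)}) (maxDeg G)
      (upd c₂ s(w,u) (c s(x,w))) u ∧ ρ ∈ miss (G.edgeSet \ {s(x,y)}) (maxDeg G) c x
  · obtain ⟨ρ₀, hρu, hρx⟩ := hUA
    have hρβ : ρ₀ ≠ c s(x,w) := fun h => hβnotu₃ (h ▸ hρu)
    have hργ : ρ₀ ≠ c s(w,u) := fun h => hγx (h ▸ hρx)
    exact caseA hG hxy hd hxw hwy hwu hux huy hc₃ hMw₃ ((hMx₃ _).2 hρx) hγy₃ hρu hγu₃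
      hcxy₃ hcwu₃ (Ne.symm hγβ) (Ne.symm hρβ) hργ
  · push_neg at hUA
    have hεx' : ε ∉ miss (G.edgeSet \ {s(x,y)}) (maxDeg G) c x := hUA ε hεu₃
    have hεy : ε ∈ miss (G.edgeSet \ {s(x,y)}) (maxDeg G) c y :=
      (hpart ε hεu₃.1).resolve_left hεx'
    have hεδ : ε ≠ δ := fun h => hεx' (by rw [h]; exact hδx)
    have hεy₃ : ε ∈ miss (G.edgeSet \ {s(x,w)}) (maxDeg G) (upd c₂ s(w,u) (c s(x,w))) y :=
      (hMy₃ ε hεδ hεβ).2 hεy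
    have hcx := count_miss hc x
    rw [ncard_inc_minus_mem G hxyE (Sym2.mem_mk_left x y)] at hcx
    obtain ⟨α, hαx⟩ : (miss (G.edgeSet \ {s(x,y)}) (maxDeg G) c x).Nonempty :=
      Set.nonempty_of_ncard_ne_zero (by omega)
    have hαu₃ : α ∉ miss (G.edgeSet \ {s(x,w)}) (maxDeg G) (upd c₂ s(w,u) (c s(x,w))) u :=
      fun h => hUA α h hαx
    have hαx₃ : α ∈ miss (G.edgeSet \ {s(x,w)}) (maxDeg G) (upd c₂ s(w,u) (c s(x,w))) x :=
      (hMx₃ α).2 hαx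
    have hαε : α ≠ ε := fun h => hαu₃ (by rw [h]; exact hεu₃)
    have hαβ : α ≠ c s(x,w) := fun h => hβx (by rw [← h]; exact hαx)
    have hαγ : α ≠ c s(w,u) := fun h => hγx (by rw [← h]; exact hαx)
    have hβα : c s(x,w) ≠ α := Ne.symm hαβ
    have hMw₄ : ∀ ρ, ρ ∈ miss (G.edgeSet \ {s(x,w)}) (maxDeg G)
        (kswap (G.edgeSet \ {s(x,w)}) (upd c₂ s(w,u) (c s(x,w))) α ε u) w
          ↔ ρ = c s(w,u) := by
      intro ρ
      by_cases hwT : w ∈ comp (G.edgeSet \ {s(x,w)}) (upd c₂ s(w,u) (c s(x,w))) α ε u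
      · rw [kswap_miss_mem hαε hαx.1 hεu₃.1 hwT, hMw₃ (flipc α ε ρ),
          flipc_fix_iff hαε (Ne.symm hαγ) (Ne.symm hεγ)]
      · rw [kswap_miss_not_mem hwT]
        exact hMw₃ ρ
    have hγu₄ : c s(w,u) ∈ miss (G.edgeSet \ {s(x,w)}) (maxDeg G)
        (kswap (G.edgeSet \ {s(x,w)}) (upd c₂ s(w,u) (c s(x,w))) α ε u) u := by
      rw [kswap_miss_mem hαε hαx.1 hεu₃.1 (mem_comp_self u),
        flipc_other (Ne.symm hαγ) (Ne.symm hεγ)]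
      exact hγu₃
    have hcxy₄ : kswap (G.edgeSet \ {s(x,w)}) (upd c₂ s(w,u) (c s(x,w))) α ε u s(x,y)
        = c s(x,w) := by
      rw [kswap_not_kedge (by rw [hcxy₃]; exact hβα) (by rw [hcxy₃]; exact Ne.symm hεβ)]
      exact hcxy₃
    have hcwu₄ : kswap (G.edgeSet \ {s(x,w)}) (upd c₂ s(w,u) (c s(x,w))) α ε u s(w,u)
        = c s(x,w) := by
      rw [kswap_not_kedge (by rw [hcwu₃]; exact hβα) (by rw [hcwu₃]; exact Ne.symm hεβ)]
      exact hcwu₃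
    have hc₄ : EC (G.edgeSet \ {s(x,w)}) (maxDeg G)
        (kswap (G.edgeSet \ {s(x,w)}) (upd c₂ s(w,u) (c s(x,w))) α ε u) :=
      EC_kswap hc₃ hαε hαx.1 hεu₃.1 u
    by_cases hxT : x ∈ comp (G.edgeSet \ {s(x,w)}) (upd c₂ s(w,u) (c s(x,w))) α ε u
    · have hyT : y ∉ comp (G.edgeSet \ {s(x,w)}) (upd c₂ s(w,u) (c s(x,w))) α ε u := by
        intro hy
        exact three_low hc₃ hxT hy (mem_comp_self u) hxyne hux.symm huy.symm
          (Or.inl hαx₃) (Or.inr hεy₃) (Or.inr hεu₃)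
      have hεx₄ : ε ∈ miss (G.edgeSet \ {s(x,w)}) (maxDeg G)
          (kswap (G.edgeSet \ {s(x,w)}) (upd c₂ s(w,u) (c s(x,w))) α ε u) x := by
        rw [kswap_miss_mem hαε hαx.1 hεu₃.1 hxT, flipc_right hαε]
        exact hαx₃
      have hεy₄ : ε ∈ miss (G.edgeSet \ {s(x,w)}) (maxDeg G)
          (kswap (G.edgeSet \ {s(x,w)}) (upd c₂ s(w,u) (c s(x,w))) α ε u) y := by
        rw [kswap_miss_not_mem hyT]
        exact hεy₃
      exact caseEnd hG hxy hd hxw hwy hwu hux huy hc₄ hεx₄ hεy₄ hMw₄ hγu₄ hcxy₄ hcwu₄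
        (Ne.symm hεβ) (Ne.symm hγβ)
    · by_cases hyT : y ∈ comp (G.edgeSet \ {s(x,w)}) (upd c₂ s(w,u) (c s(x,w))) α ε u
      · have hαy₄ : α ∈ miss (G.edgeSet \ {s(x,w)}) (maxDeg G)
            (kswap (G.edgeSet \ {s(x,w)}) (upd c₂ s(w,u) (c s(x,w))) α ε u) y := by
          rw [kswap_miss_mem hαε hαx.1 hεu₃.1 hyT, flipc_left]
          exact hεy₃
        have hαx₄ : α ∈ miss (G.edgeSet \ {s(x,w)}) (maxDeg G)
            (kswap (G.edgeSet \ {s(x,w)}) (upd c₂ s(w,u) (c s(x,w))) α ε u) x := by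
          rw [kswap_miss_not_mem hxT]
          exact hαx₃
        exact caseEnd hG hxy hd hxw hwy hwu hux huy hc₄ hαx₄ hαy₄ hMw₄ hγu₄ hcxy₄ hcwu₄
          hβα (Ne.symm hγβ)
      · have hαu₄ : α ∈ miss (G.edgeSet \ {s(x,w)}) (maxDeg G)
            (kswap (G.edgeSet \ {s(x,w)}) (upd c₂ s(w,u) (c s(x,w))) α ε u) u := by
          rw [kswap_miss_mem hαε hαx.1 hεu₃.1 (mem_comp_self u), flipc_left]
          exact hεu₃
        have hαx₄ : α ∈ miss (G.edgeSet \ {s(x,w)}) (maxDeg G)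
            (kswap (G.edgeSet \ {s(x,w)}) (upd c₂ s(w,u) (c s(x,w))) α ε u) x := by
          rw [kswap_miss_not_mem hxT]
          exact hαx₃
        have hγy₄ : c s(w,u) ∈ miss (G.edgeSet \ {s(x,w)}) (maxDeg G)
            (kswap (G.edgeSet \ {s(x,w)}) (upd c₂ s(w,u) (c s(x,w))) α ε u) y := by
          rw [kswap_miss_not_mem hyT]
          exact hγy₃
        exact caseA hG hxy hd hxw hwy hwu hux huy hc₄ hMw₄ hαx₄ hγy₄ hαu₄ hγu₄
          hcxy₄ hcwu₄ (Ne.symm hγβ) hβα hαγ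

end ClaimB

end VizingAux

open VizingAux

/-- If `G` is critical and `xy ∈ E(G)` with `d_G(x) + d_G(y) = Δ(G) + 2`,
then every vertex of `N(N(x) ∪ N(y)) \ {x, y}` has degree at least `Δ(G) − 1`. -/
theorem critical_second_neighbors_degree [Fintype V] (G : SimpleGraph V)
    (hG : IsCritical G) {x y : V} (hxy : G.Adj x y)
    (hdeg : deg G x + deg G y = maxDeg G + 2) :
    ∀ u ∈ (⋃ w ∈ G.neighborSet x ∪ G.neighborSet y, G.neighborSet w) \ {x, y},
      maxDeg G - 1 ≤ deg G u := by
  intro u hu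
  obtain ⟨huN, huxy⟩ := hu
  obtain ⟨w, hw, huw⟩ := Set.mem_iUnion₂.1 huN
  have hux : u ≠ x := by
    rintro rfl
    exact huxy (Set.mem_insert u {y})
  have huy : u ≠ y := by
    rintro rfl
    exact huxy (Set.mem_insert_of_mem x rfl)
  have huw' : G.Adj w u := (SimpleGraph.mem_neighborSet G w u).1 huw
  have hd' : deg G y + deg G x = maxDeg G + 2 := by omega
  suffices h : maxDeg G ≤ deg G u + 1 by omega
  rcases hw with hwx | hwy'
  · have hwx' : G.Adj x w := (SimpleGraph.mem_neighborSet G x w).1 hwx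
    by_cases hwy : w = y
    · subst hwy
      have := claimA hG hxy.symm hd' huw' hux
      omega
    · exact claimB hG hxy hdeg hwx' hwy huw' hux huy
  · have hwy'' : G.Adj y w := (SimpleGraph.mem_neighborSet G y w).1 hwy'
    by_cases hwx : w = x
    · subst hwx
      have := claimA hG hxy hdeg huw' huy
      omega
    · exact claimB hG hxy.symm hd' hwy'' hwx huw' huy hux
end

section
/- If G is a 3-critical graph, then |E(G)| ≥ (4/3)·|V(G)|. -/
open SimpleGraph

variable {V : Type*}

section Aux

/-! ### Cardinality helpers -/

private lemma two_le_ncard' {α : Type*} {s : Set α} (hs : s.Finite) {a b : α}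
    (ha : a ∈ s) (hb : b ∈ s) (hab : a ≠ b) : 2 ≤ s.ncard := by
  have h1 : ({a, b} : Set α).ncard ≤ s.ncard :=
    Set.ncard_le_ncard (Set.insert_subset_iff.mpr ⟨ha, Set.singleton_subset_iff.mpr hb⟩) hs
  rwa [Set.ncard_pair hab] at h1

private lemma three_le_ncard' {α : Type*} {s : Set α} (hs : s.Finite) {a b c : α}
    (ha : a ∈ s) (hb : b ∈ s) (hc : c ∈ s) (hab : a ≠ b) (hac : a ≠ c) (hbc : b ≠ c) :
    3 ≤ s.ncard := by
  have h1 : ({a, b, c} : Set α).ncard ≤ s.ncard :=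
    Set.ncard_le_ncard (by
      intro x hx
      simp only [Set.mem_insert_iff, Set.mem_singleton_iff] at hx
      rcases hx with rfl | rfl | rfl <;> assumption) hs
  have h2 : ({a, b, c} : Set α).ncard = 3 := by
    rw [Set.ncard_insert_of_notMem (by simp [hab, hac]), Set.ncard_pair hbc]
  omega

variable [Fintype V]

/-! ### Basic facts about the edge chromatic number -/

private lemma exists_proper (G : SimpleGraph V) : ∃ n c, IsProperEdgeColoring G n c := by
  classical
  refine ⟨Fintype.card (Sym2 V), fun e => (Fintype.equivFin (Sym2 V) e : ℕ), fun e _ => Fin.isLt _,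
    fun e₁ _ e₂ _ hne _ hc => hne ?_⟩
  exact (Fintype.equivFin (Sym2 V)).injective (Fin.val_injective hc)

private lemma chrom_coloring (G : SimpleGraph V) :
    ∃ c, IsProperEdgeColoring G (edgeChromaticNumber G) c := by
  obtain ⟨n, c, h⟩ := exists_proper G
  exact Nat.sInf_mem (⟨n, c, h⟩ : Set.Nonempty {n | ∃ c, IsProperEdgeColoring G n c})

private lemma proper_mono {G : SimpleGraph V} {n m : ℕ} {c : Sym2 V → ℕ}
    (hnm : n ≤ m) (h : IsProperEdgeColoring G n c) : IsProperEdgeColoring G m c :=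
  ⟨fun e he => lt_of_lt_of_le (h.1 e he) hnm, h.2⟩

private lemma chrom_le {G : SimpleGraph V} {n : ℕ} {c : Sym2 V → ℕ}
    (h : IsProperEdgeColoring G n c) : edgeChromaticNumber G ≤ n :=
  Nat.sInf_le ⟨c, h⟩

/-! ### Degrees -/

private lemma deg_le_of_maxDeg {G : SimpleGraph V} (h3 : maxDeg G = 3) (v : V) :
    deg G v ≤ 3 := by
  have : deg G v ≤ maxDeg G := by
    apply le_csSup
    · have : {d | ∃ v, deg G v = d} = Set.range (deg G) := by ext; simp [Set.range]
      rw [this]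
      exact (Set.finite_range _).bddAbove
    · exact ⟨v, rfl⟩
  omega

private lemma exists_deg3 {G : SimpleGraph V} (h3 : maxDeg G = 3) : ∃ v, deg G v = 3 := by
  by_cases hne : Set.Nonempty {d | ∃ v, deg G v = d}
  · have hbdd : BddAbove {d | ∃ v, deg G v = d} := by
      have : {d | ∃ v, deg G v = d} = Set.range (deg G) := by ext; simp [Set.range]
      rw [this]
      exact (Set.finite_range _).bddAbove
    have := Nat.sSup_mem hne hbdd
    rw [show sSup {d | ∃ v, deg G v = d} = maxDeg G from rfl, h3] at this
    exact this
  · rw [Set.not_nonempty_iff_eq_empty] at hne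
    rw [maxDeg, hne] at h3
    simp at h3

end Aux
section Del
set_option linter.unusedSectionVars false
variable [Fintype V]

/-- The graph `G` minus the edge `s(u,v)`. -/
private def Gdel (G : SimpleGraph V) (u v : V) : SimpleGraph V where
  Adj x y := G.Adj x y ∧ s(x, y) ≠ s(u, v)
  symm := ⟨by
    intro x y ⟨h1, h2⟩
    exact ⟨h1.symm, by rwa [Sym2.eq_swap]⟩⟩
  loopless := ⟨fun x ⟨h, _⟩ => G.irrefl h⟩

private lemma gdel_adj (G : SimpleGraph V) (u v x y : V) :
    (Gdel G u v).Adj x y ↔ G.Adj x y ∧ s(x, y) ≠ s(u, v) := Iff.rfl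

private lemma gdel_comm (G : SimpleGraph V) (u v : V) : Gdel G u v = Gdel G v u := by
  ext x y
  rw [gdel_adj, gdel_adj, Sym2.eq_swap (a := u)]

private lemma gdel_le (G : SimpleGraph V) (u v : V) : Gdel G u v ≤ G := fun _ _ h => h.1

private lemma gdel_edgeSet (G : SimpleGraph V) (u v : V) (e : Sym2 V) :
    e ∈ (Gdel G u v).edgeSet ↔ e ∈ G.edgeSet ∧ e ≠ s(u, v) := by
  induction e using Sym2.ind with
  | _ x y => rw [mem_edgeSet, mem_edgeSet, gdel_adj]

private lemma gdel_nbr_left (G : SimpleGraph V) (u v : V) :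
    (Gdel G u v).neighborSet u = G.neighborSet u \ {v} := by
  ext y
  simp only [mem_neighborSet, gdel_adj, Set.mem_diff, Set.mem_singleton_iff]
  constructor
  · rintro ⟨h1, h2⟩
    refine ⟨h1, fun hy => h2 ?_⟩
    subst hy; rfl
  · rintro ⟨h1, h2⟩
    refine ⟨h1, fun he => ?_⟩
    rw [Sym2.eq_iff] at he
    rcases he with ⟨-, rfl⟩ | ⟨rfl, rfl⟩
    · exact h2 rfl
    · exact h2 rfl

private lemma gdel_nbr_right (G : SimpleGraph V) (u v : V) :
    (Gdel G u v).neighborSet v = G.neighborSet v \ {u} := by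
  rw [gdel_comm, gdel_nbr_left]

private lemma gdel_nbr_other (G : SimpleGraph V) (u v x : V) (hxu : x ≠ u) (hxv : x ≠ v) :
    (Gdel G u v).neighborSet x = G.neighborSet x := by
  ext y
  simp only [mem_neighborSet, gdel_adj]
  refine ⟨fun h => h.1, fun h => ⟨h, fun he => ?_⟩⟩
  rw [Sym2.eq_iff] at he
  rcases he with ⟨rfl, rfl⟩ | ⟨rfl, rfl⟩
  · exact hxu rfl
  · exact hxv rfl

private lemma gdel_deg_left {G : SimpleGraph V} {u v : V} (h : G.Adj u v) :
    deg (Gdel G u v) u = deg G u - 1 := by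
  rw [deg, gdel_nbr_left,
    Set.ncard_diff_singleton_of_mem (show v ∈ G.neighborSet u from h)]
  rfl

private lemma gdel_deg_right {G : SimpleGraph V} {u v : V} (h : G.Adj u v) :
    deg (Gdel G u v) v = deg G v - 1 := by
  rw [gdel_comm]
  exact gdel_deg_left h.symm

private lemma gdel_deg_other {G : SimpleGraph V} (u v : V) {x : V} (hxu : x ≠ u) (hxv : x ≠ v) :
    deg (Gdel G u v) x = deg G x := by
  rw [deg, gdel_nbr_other G u v x hxu hxv]
  rfl

private lemma gdel_deg_le (G : SimpleGraph V) (u v x : V) :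
    deg (Gdel G u v) x ≤ deg G x := by
  apply Set.ncard_le_ncard _ (Set.toFinite _)
  intro y hy
  exact hy.1

/-- From criticality: the graph minus an edge admits a proper coloring with
`χ'(G) - 1` colors. -/
private lemma exists_del_coloring {G : SimpleGraph V} (hcrit : IsCritical G) {u v : V}
    (h : G.Adj u v) :
    ∃ c, IsProperEdgeColoring (Gdel G u v) (edgeChromaticNumber G - 1) c := by
  classical
  set H : G.Subgraph :=
    { verts := Set.univ
      Adj := fun x y => G.Adj x y ∧ s(x, y) ≠ s(u, v)
      adj_sub := fun hxy => hxy.1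
      edge_vert := fun _ => Set.mem_univ _
      symm := ⟨by
        intro x y ⟨h1, h2⟩
        exact ⟨h1.symm, by rwa [Sym2.eq_swap]⟩⟩ } with hH
  have hne : H ≠ ⊤ := by
    intro ht
    have : H.Adj u v ↔ (⊤ : G.Subgraph).Adj u v := by rw [ht]
    rw [Subgraph.top_adj] at this
    exact (this.mpr h).2 rfl
  have hlt := hcrit.2 H hne
  haveI : Fintype ↥H.verts := (inferInstance : Fintype (Set.univ : Set V))
  obtain ⟨c, hc⟩ := chrom_coloring H.coe
  refine ⟨fun e => c (e.map fun x => ⟨x, Set.mem_univ x⟩), ?_, ?_⟩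
  · intro e he
    induction e using Sym2.ind with
    | _ x y =>
      rw [gdel_edgeSet, mem_edgeSet] at he
      have hadj : H.coe.Adj ⟨x, Set.mem_univ x⟩ ⟨y, Set.mem_univ y⟩ := ⟨he.1, he.2⟩
      have hlt2 := hc.1 _ ((mem_edgeSet _).mpr hadj)
      simp only [Sym2.map_pair_eq]
      omega
  · intro e₁ he₁ e₂ he₂ hne12 hshare
    have hco : ∀ e, e ∈ (Gdel G u v).edgeSet →
        (e.map fun x => ⟨x, Set.mem_univ x⟩) ∈ H.coe.edgeSet := by
      intro e he
      induction e using Sym2.ind with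
      | _ x y =>
        rw [gdel_edgeSet, mem_edgeSet] at he
        simp only [Sym2.map_pair_eq, mem_edgeSet]
        exact ⟨he.1, he.2⟩
    have hinj : Function.Injective fun x : V => (⟨x, Set.mem_univ x⟩ : ↥H.verts) :=
      fun a b hab => congrArg Subtype.val hab
    obtain ⟨p, hp₁, hp₂⟩ := hshare
    exact hc.2 _ (hco e₁ he₁) _ (hco e₂ he₂)
      (fun hmap => hne12 (Sym2.map.injective hinj hmap))
      ⟨⟨p, Set.mem_univ p⟩, Sym2.mem_map.mpr ⟨p, hp₁, rfl⟩, Sym2.mem_map.mpr ⟨p, hp₂, rfl⟩⟩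

end Del
section Free
set_option linter.unusedSectionVars false
variable [Fintype V]

/-- Color `a` does not appear on any edge at `x`. -/
private def Free (G' : SimpleGraph V) (c : Sym2 V → ℕ) (x : V) (a : ℕ) : Prop :=
  ∀ y, G'.Adj x y → c s(x, y) ≠ a

private lemma edge_eq_of_mem {G' : SimpleGraph V} {e : Sym2 V} (he : e ∈ G'.edgeSet)
    {p : V} (hp : p ∈ e) : ∃ z, G'.Adj p z ∧ e = s(p, z) := by
  induction e using Sym2.ind with
  | _ x y =>
    rw [mem_edgeSet] at he
    rw [Sym2.mem_iff] at hp
    rcases hp with rfl | rfl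
    · exact ⟨y, he, rfl⟩
    · exact ⟨x, he.symm, Sym2.eq_swap⟩

private lemma free_not_used {G' : SimpleGraph V} {c : Sym2 V → ℕ} {p : V} {a : ℕ}
    (hf : Free G' c p a) {e : Sym2 V} (he : e ∈ G'.edgeSet) (hp : p ∈ e) : c e ≠ a := by
  obtain ⟨z, hz, rfl⟩ := edge_eq_of_mem he hp
  exact hf z hz

/-- Extending a coloring of `G - uv` by a color free at both `u` and `v`. -/
private lemma chrom_le_of_extend {G : SimpleGraph V} {u v : V} (h : G.Adj u v) {k : ℕ}
    {c : Sym2 V → ℕ} (hc : IsProperEdgeColoring (Gdel G u v) k c) {a : ℕ} (ha : a < k)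
    (hu : Free (Gdel G u v) c u a) (hv : Free (Gdel G u v) c v a) :
    edgeChromaticNumber G ≤ k := by
  classical
  apply chrom_le (c := fun e => if e = s(u, v) then a else c e)
  constructor
  · intro e he
    by_cases h1 : e = s(u, v)
    · simpa [h1] using ha
    · simp only [h1, if_false]
      exact hc.1 e ((gdel_edgeSet G u v e).mpr ⟨he, h1⟩)
  · intro e₁ he₁ e₂ he₂ hne hshare
    obtain ⟨p, hp₁, hp₂⟩ := hshare
    by_cases h1 : e₁ = s(u, v) <;> by_cases h2 : e₂ = s(u, v)
    · exact absurd (h1.trans h2.symm) hne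
    · simp only [h1, h2, if_true, if_false, if_pos rfl]
      have he₂' : e₂ ∈ (Gdel G u v).edgeSet := (gdel_edgeSet G u v e₂).mpr ⟨he₂, h2⟩
      subst h1
      rw [Sym2.mem_iff] at hp₁
      rcases hp₁ with rfl | rfl
      · exact fun hh => free_not_used hu he₂' hp₂ hh.symm
      · exact fun hh => free_not_used hv he₂' hp₂ hh.symm
    · simp only [h1, h2, if_false, if_pos rfl]
      have he₁' : e₁ ∈ (Gdel G u v).edgeSet := (gdel_edgeSet G u v e₁).mpr ⟨he₁, h1⟩
      subst h2
      rw [Sym2.mem_iff] at hp₂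
      rcases hp₂ with rfl | rfl
      · exact free_not_used hu he₁' hp₁
      · exact free_not_used hv he₁' hp₁
    · simp only [h1, h2, if_false]
      exact hc.2 e₁ ((gdel_edgeSet G u v e₁).mpr ⟨he₁, h1⟩) e₂
        ((gdel_edgeSet G u v e₂).mpr ⟨he₂, h2⟩) hne ⟨p, hp₁, hp₂⟩

/-- If the degrees of `x` and `y` sum to less than `k`, a common free color exists. -/
private lemma exists_common_free {G' : SimpleGraph V} {k : ℕ} {c : Sym2 V → ℕ}
    (hc : IsProperEdgeColoring G' k c) (x y : V) (hd : deg G' x + deg G' y < k) :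
    ∃ a < k, Free G' c x a ∧ Free G' c y a := by
  classical
  set Ux : Set ℕ := (fun z => c s(x, z)) '' G'.neighborSet x with hUx
  set Uy : Set ℕ := (fun z => c s(y, z)) '' G'.neighborSet y with hUy
  have hUxcard : Ux.ncard ≤ deg G' x := Set.ncard_image_le (Set.toFinite _)
  have hUycard : Uy.ncard ≤ deg G' y := Set.ncard_image_le (Set.toFinite _)
  have hfin : (Ux ∪ Uy).Finite := Set.Finite.union (Set.toFinite _) (Set.toFinite _)
  have h1 : (Ux ∪ Uy).ncard ≤ deg G' x + deg G' y := by
    have := Set.ncard_union_le Ux Uy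
    omega
  have h2 : hfin.toFinset.card = (Ux ∪ Uy).ncard := (Set.ncard_eq_toFinset_card _ hfin).symm
  have hsub : ¬ (Finset.range k ⊆ hfin.toFinset) := by
    intro hsub
    have := Finset.card_le_card hsub
    rw [Finset.card_range] at this
    omega
  obtain ⟨a, hamem, haU⟩ := Finset.not_subset.mp hsub
  rw [Finset.mem_range] at hamem
  rw [Set.Finite.mem_toFinset, Set.mem_union] at haU
  push_neg at haU
  obtain ⟨hax, hay⟩ := haU
  have hak := hamem
  refine ⟨a, hak, fun z hz => ?_, fun z hz => ?_⟩
  · exact fun hh => hax ⟨z, hz, hh⟩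
  · exact fun hh => hay ⟨z, hz, hh⟩

/-- A vertex of degree 3 forces at least 3 colors. -/
private lemma three_le_chrom {G : SimpleGraph V} {v : V} (hv : deg G v = 3) :
    3 ≤ edgeChromaticNumber G := by
  obtain ⟨c, hc⟩ := chrom_coloring G
  obtain ⟨a, b, d, hab, had, hbd, hset⟩ := Set.ncard_eq_three.mp hv
  have hmem : ∀ z ∈ ({a, b, d} : Set V), G.Adj v z := by
    intro z hz
    rw [← hset] at hz
    exact hz
  have ha : G.Adj v a := hmem a (by simp)
  have hb : G.Adj v b := hmem b (by simp)
  have hd : G.Adj v d := hmem d (by simp)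
  have h1 : c s(v, a) ≠ c s(v, b) := hc.2 _ ((mem_edgeSet _).mpr ha) _ ((mem_edgeSet _).mpr hb)
    (fun hh => hab (Sym2.congr_right.mp hh)) ⟨v, by simp, by simp⟩
  have h2 : c s(v, a) ≠ c s(v, d) := hc.2 _ ((mem_edgeSet _).mpr ha) _ ((mem_edgeSet _).mpr hd)
    (fun hh => had (Sym2.congr_right.mp hh)) ⟨v, by simp, by simp⟩
  have h3 : c s(v, b) ≠ c s(v, d) := hc.2 _ ((mem_edgeSet _).mpr hb) _ ((mem_edgeSet _).mpr hd)
    (fun hh => hbd (Sym2.congr_right.mp hh)) ⟨v, by simp, by simp⟩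
  have l1 := hc.1 _ ((mem_edgeSet _).mpr ha)
  have l2 := hc.1 _ ((mem_edgeSet _).mpr hb)
  have l3 := hc.1 _ ((mem_edgeSet _).mpr hd)
  omega

end Free
section Kempe
set_option linter.unusedSectionVars false
variable [Fintype V]

/-- The two-colored adjacency relation for colors `a`, `b`. -/
private def KR (G' : SimpleGraph V) (c : Sym2 V → ℕ) (a b : ℕ) (x y : V) : Prop :=
  G'.Adj x y ∧ (c s(x, y) = a ∨ c s(x, y) = b)

private lemma KR_symm (G' : SimpleGraph V) (c : Sym2 V → ℕ) (a b : ℕ) :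
    Symmetric (KR G' c a b) := by
  intro x y ⟨h1, h2⟩
  exact ⟨h1.symm, by rwa [Sym2.eq_swap]⟩

/-- The Kempe component of `v0`. -/
private def KS (G' : SimpleGraph V) (c : Sym2 V → ℕ) (a b : ℕ) (v0 : V) : Set V :=
  {y | Relation.ReflTransGen (KR G' c a b) v0 y}

private lemma KS_mem_self (G' : SimpleGraph V) (c : Sym2 V → ℕ) (a b : ℕ) (v0 : V) :
    v0 ∈ KS G' c a b v0 := Relation.ReflTransGen.refl

private lemma KS_closed {G' : SimpleGraph V} {c : Sym2 V → ℕ} {a b : ℕ} {v0 x y : V}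
    (h : KR G' c a b x y) : x ∈ KS G' c a b v0 ↔ y ∈ KS G' c a b v0 :=
  ⟨fun hx => hx.tail h, fun hy => hy.tail (KR_symm G' c a b h)⟩

/-- All endpoints of an `{a,b}`-colored edge touching the component lie in it. -/
private lemma KS_edge_closed {G' : SimpleGraph V} {c : Sym2 V → ℕ} {a b : ℕ} {v0 : V}
    {e : Sym2 V} (he : e ∈ G'.edgeSet) (hcol : c e = a ∨ c e = b)
    (hx : ∃ x ∈ e, x ∈ KS G' c a b v0) : ∀ y ∈ e, y ∈ KS G' c a b v0 := by
  induction e using Sym2.ind with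
  | _ p q =>
    rw [mem_edgeSet] at he
    have hpq : KR G' c a b p q := ⟨he, hcol⟩
    obtain ⟨x, hx1, hx2⟩ := hx
    rw [Sym2.mem_iff] at hx1
    intro y hy
    rw [Sym2.mem_iff] at hy
    have hp : p ∈ KS G' c a b v0 := by
      rcases hx1 with rfl | rfl
      · exact hx2
      · exact (KS_closed hpq).mpr hx2
    rcases hy with rfl | rfl
    · exact hp
    · exact (KS_closed hpq).mp hp

open Classical in
/-- Swap colors `a`,`b` on the Kempe component of `v0`. -/
private noncomputable def kswap (G' : SimpleGraph V) (c : Sym2 V → ℕ) (a b : ℕ) (v0 : V) :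
    Sym2 V → ℕ :=
  fun e => if (c e = a ∨ c e = b) ∧ (∃ x ∈ e, x ∈ KS G' c a b v0) then
    (if c e = a then b else a) else c e

private lemma kswap_untouched {G' : SimpleGraph V} {c : Sym2 V → ℕ} {a b : ℕ} {v0 : V}
    {e : Sym2 V}
    (h : ¬((c e = a ∨ c e = b) ∧ (∃ x ∈ e, x ∈ KS G' c a b v0))) :
    kswap G' c a b v0 e = c e := by
  rw [kswap, if_neg h]

private lemma kswap_proper {G' : SimpleGraph V} {c : Sym2 V → ℕ} {k a b : ℕ} {v0 : V}
    (hc : IsProperEdgeColoring G' k c) (hab : a ≠ b) (hak : a < k) (hbk : b < k) :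
    IsProperEdgeColoring G' k (kswap G' c a b v0) := by
  classical
  constructor
  · intro e he
    rw [kswap]
    split
    · split <;> assumption
    · exact hc.1 e he
  · intro e₁ he₁ e₂ he₂ hne hshare
    obtain ⟨p, hp₁, hp₂⟩ := hshare
    have horig : c e₁ ≠ c e₂ := hc.2 e₁ he₁ e₂ he₂ hne ⟨p, hp₁, hp₂⟩
    by_cases h1 : (c e₁ = a ∨ c e₁ = b) ∧ (∃ x ∈ e₁, x ∈ KS G' c a b v0) <;>
      by_cases h2 : (c e₂ = a ∨ c e₂ = b) ∧ (∃ x ∈ e₂, x ∈ KS G' c a b v0)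
    · rw [kswap, if_pos h1, kswap, if_pos h2]
      rcases h1.1 with hc1 | hc1 <;> rcases h2.1 with hc2 | hc2
      · exact absurd (hc1.trans hc2.symm) horig
      · rw [if_pos hc1, if_neg (by rw [hc2]; exact hab.symm)]
        exact hab.symm
      · rw [if_neg (by rw [hc1]; exact hab.symm), if_pos hc2]
        exact hab
      · exact absurd (hc1.trans hc2.symm) horig
    · -- e₁ swapped, e₂ not
      rw [kswap, if_pos h1, kswap_untouched h2]
      have hpS : p ∈ KS G' c a b v0 := KS_edge_closed he₁ h1.1 h1.2 p hp₁
      have hnc2 : ¬(c e₂ = a ∨ c e₂ = b) := by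
        intro hcc
        exact h2 ⟨hcc, p, hp₂, hpS⟩
      push_neg at hnc2
      split
      · exact Ne.symm hnc2.2
      · exact Ne.symm hnc2.1
    · rw [kswap_untouched h1, kswap, if_pos h2]
      have hpS : p ∈ KS G' c a b v0 := KS_edge_closed he₂ h2.1 h2.2 p hp₂
      have hnc1 : ¬(c e₁ = a ∨ c e₁ = b) := by
        intro hcc
        exact h1 ⟨hcc, p, hp₁, hpS⟩
      push_neg at hnc1
      split
      · exact hnc1.2
      · exact hnc1.1
    · rw [kswap_untouched h1, kswap_untouched h2]
      exact horig

/-- A vertex outside the component keeps its free colors. -/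
private lemma kswap_free_of_not_mem {G' : SimpleGraph V} {c : Sym2 V → ℕ} {a b : ℕ} {v0 : V}
    {x : V} (hx : x ∉ KS G' c a b v0) {α : ℕ} (hf : Free G' c x α) :
    Free G' (kswap G' c a b v0) x α := by
  intro y hy
  have : kswap G' c a b v0 s(x, y) = c s(x, y) := by
    apply kswap_untouched
    rintro ⟨hcol, hmem⟩
    exact hx (KS_edge_closed ((mem_edgeSet _).mpr hy) hcol hmem x (Sym2.mem_mk_left x y))
  rw [this]
  exact hf y hy

/-- The base vertex, if it has a unique incident edge colored `a`, frees up `a`. -/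
private lemma kswap_free_base {G' : SimpleGraph V} {c : Sym2 V → ℕ} {a b : ℕ} {v0 t : V}
    (hab : a ≠ b) (ht : ∀ y, G'.Adj v0 y → y = t) (hcol : c s(v0, t) = a) :
    Free G' (kswap G' c a b v0) v0 a := by
  intro y hy
  have hyt := ht y hy
  subst hyt
  rw [kswap, if_pos ⟨Or.inl hcol, v0, Sym2.mem_mk_left _ _, KS_mem_self _ _ _ _ _⟩,
    if_pos hcol]
  exact Ne.symm hab

end Kempe
section Paths
set_option linter.unusedSectionVars false
variable [Fintype V]

private lemma endpoint_nbr {K : SimpleGraph V} {a b : V} (p : K.Walk a b) (hab : a ≠ b) :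
    ∃ z, K.Adj a z ∧ z ∈ p.support := by
  obtain ⟨z, hadj, p', hp'⟩ := Walk.exists_eq_cons_of_ne hab p
  refine ⟨z, hadj, ?_⟩
  rw [hp', Walk.support_cons]
  exact List.mem_cons_of_mem _ p'.start_mem_support

private lemma two_nbrs {K : SimpleGraph V} {a b : V} (p : K.Walk a b) (hp : p.IsPath)
    {x : V} (hx : x ∈ p.support) (hxa : x ≠ a) (hxb : x ≠ b) :
    ∃ z₁ z₂, z₁ ≠ z₂ ∧ K.Adj x z₁ ∧ K.Adj x z₂ ∧ z₁ ∈ p.support ∧ z₂ ∈ p.support := by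
  classical
  set q₁ := p.takeUntil x hx with hq₁def
  set q₂ := p.dropUntil x hx with hq₂def
  have hspec : q₁.append q₂ = p := p.take_spec hx
  have hsupp : p.support = q₁.support ++ q₂.support.tail := by
    rw [← hspec, Walk.support_append]
  have hnd : (q₁.support ++ q₂.support.tail).Nodup := by
    rw [← hsupp]; exact hp.support_nodup
  have hdisj : q₁.support.Disjoint q₂.support.tail := List.disjoint_of_nodup_append hnd
  obtain ⟨z₂, hadj₂, q₂', hq₂'⟩ := Walk.exists_eq_cons_of_ne hxb q₂
  obtain ⟨z₁, hadj₁, r, hr⟩ := Walk.exists_eq_cons_of_ne hxa q₁.reverse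
  have hz₁q₁ : z₁ ∈ q₁.support := by
    have : z₁ ∈ q₁.reverse.support := by
      rw [hr, Walk.support_cons]
      exact List.mem_cons_of_mem _ r.start_mem_support
    rwa [Walk.support_reverse, List.mem_reverse] at this
  have hz₂q₂ : z₂ ∈ q₂.support.tail := by
    rw [hq₂', Walk.support_cons]
    exact q₂'.start_mem_support
  refine ⟨z₁, z₂, fun hzz => hdisj hz₁q₁ (hzz ▸ hz₂q₂), hadj₁, hadj₂, ?_, ?_⟩
  · rw [hsupp]; exact List.mem_append_left _ hz₁q₁
  · rw [hsupp]; exact List.mem_append_right _ hz₂q₂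

private lemma support_closed {K : SimpleGraph V} (hdeg : ∀ z, deg K z ≤ 2) {a b : V}
    (p : K.Walk a b) (hp : p.IsPath) (hab : a ≠ b) (hda : deg K a ≤ 1) (hdb : deg K b ≤ 1) :
    ∀ x ∈ p.support, ∀ y, K.Adj x y → y ∈ p.support := by
  have hda' : (K.neighborSet a).ncard ≤ 1 := hda
  have hdb' : (K.neighborSet b).ncard ≤ 1 := hdb
  have hdeg' : ∀ z, (K.neighborSet z).ncard ≤ 2 := hdeg
  intro x hx y hxy
  by_cases hxa : x = a
  · subst hxa
    obtain ⟨z, hz, hzs⟩ := endpoint_nbr p hab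
    by_cases hyz : y = z
    · exact hyz ▸ hzs
    · exact absurd (two_le_ncard' (s := K.neighborSet x) (Set.toFinite _) hxy hz hyz)
        (by omega)
  by_cases hxb : x = b
  · subst hxb
    obtain ⟨z, hz, hzs⟩ := endpoint_nbr p.reverse (Ne.symm hab)
    have hzs' : z ∈ p.support := by rwa [Walk.support_reverse, List.mem_reverse] at hzs
    by_cases hyz : y = z
    · exact hyz ▸ hzs'
    · exact absurd (two_le_ncard' (s := K.neighborSet x) (Set.toFinite _) hxy hz hyz)
        (by omega)
  · obtain ⟨z₁, z₂, hzz, hz₁, hz₂, hz₁s, hz₂s⟩ := two_nbrs p hp hx hxa hxb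
    by_cases hy₁ : y = z₁
    · exact hy₁ ▸ hz₁s
    by_cases hy₂ : y = z₂
    · exact hy₂ ▸ hz₂s
    · exact absurd (three_le_ncard' (s := K.neighborSet x) (Set.toFinite _) hxy hz₁ hz₂
        hy₁ hy₂ hzz) (by have := hdeg' x; omega)

private lemma no_three_endpoints {K : SimpleGraph V} (hdeg : ∀ z, deg K z ≤ 2) {u v v' : V}
    (huv : u ≠ v) (huv' : u ≠ v') (hvv' : v ≠ v')
    (hdu : deg K u ≤ 1) (hdv : deg K v ≤ 1) (hdv' : deg K v' ≤ 1)
    (h1 : Relation.ReflTransGen K.Adj v u) (h2 : Relation.ReflTransGen K.Adj v' u) :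
    False := by
  classical
  have hr : K.Reachable v v' :=
    ((reachable_iff_reflTransGen v u).mpr h1).trans
      ((reachable_iff_reflTransGen v' u).mpr h2).symm
  obtain ⟨p0⟩ := hr
  set p := p0.toPath with hpdef
  have hclosed := support_closed hdeg p.1 p.2 hvv' hdv hdv'
  have humem : ∀ z, Relation.ReflTransGen K.Adj v z → z ∈ p.1.support := by
    intro z hz
    induction hz with
    | refl => exact p.1.start_mem_support
    | tail hst hstep ih => exact hclosed _ ih _ hstep
  obtain ⟨z₁, z₂, hzz, hz₁, hz₂, -, -⟩ :=
    two_nbrs p.1 p.2 (humem u h1) huv huv'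
  have h2le := two_le_ncard' (s := K.neighborSet u) (Set.toFinite _) hz₁ hz₂ hzz
  have h' : (K.neighborSet u).ncard ≤ 1 := hdu
  omega

end Paths
section Mid
set_option linter.unusedSectionVars false
variable [Fintype V]

private lemma no_common_free {G : SimpleGraph V} (hcrit : IsCritical G) {u v : V}
    (h : G.Adj u v) {c : Sym2 V → ℕ}
    (hc : IsProperEdgeColoring (Gdel G u v) (edgeChromaticNumber G - 1) c)
    (hpos : 1 ≤ edgeChromaticNumber G) {a : ℕ} (ha : a < edgeChromaticNumber G - 1)
    (hu : Free (Gdel G u v) c u a) (hv : Free (Gdel G u v) c v a) : False := by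
  have := chrom_le_of_extend h hc ha hu hv
  omega

private lemma no_deg_one {G : SimpleGraph V} (hcrit : IsCritical G)
    (hchrom4 : 4 ≤ edgeChromaticNumber G) (hdegle : ∀ x, deg G x ≤ 3) (v : V) :
    deg G v ≠ 1 := by
  intro h1
  obtain ⟨u, hu⟩ := Set.ncard_eq_one.mp h1
  have huv : G.Adj u v := (by rw [← mem_neighborSet, hu]; rfl : G.Adj v u).symm
  obtain ⟨c, hc⟩ := exists_del_coloring hcrit huv
  have hdv : deg (Gdel G u v) v = 0 := by rw [gdel_deg_right huv, h1]
  have hdu : deg (Gdel G u v) u ≤ 2 := by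
    rw [gdel_deg_left huv]
    have := hdegle u
    omega
  obtain ⟨a, ha, hfu, hfv⟩ := exists_common_free hc u v (by omega)
  exact no_common_free hcrit huv hc (by omega) ha hfu hfv

private lemma chrom_eq_four {G : SimpleGraph V} (hcrit : IsCritical G)
    (hchrom4 : 4 ≤ edgeChromaticNumber G) (hdegle : ∀ x, deg G x ≤ 3) {v : V}
    (hv2 : deg G v = 2) : edgeChromaticNumber G = 4 := by
  by_contra hne
  have h5 : 5 ≤ edgeChromaticNumber G := by omega
  obtain ⟨u, hu⟩ := Set.nonempty_of_ncard_ne_zero (s := G.neighborSet v) (by rw [← deg, hv2]; omega)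
  have huv : G.Adj u v := (hu : G.Adj v u).symm
  obtain ⟨c, hc⟩ := exists_del_coloring hcrit huv
  have hdv : deg (Gdel G u v) v = 1 := by rw [gdel_deg_right huv, hv2]
  have hdu : deg (Gdel G u v) u ≤ 2 := by
    rw [gdel_deg_left huv]
    have := hdegle u
    omega
  obtain ⟨a, ha, hfu, hfv⟩ := exists_common_free hc u v (by omega)
  exact no_common_free hcrit huv hc (by omega) ha hfu hfv

/-- Vizing-type lemma A: every neighbor of a degree-2 vertex has degree 3. -/
private lemma lemA {G : SimpleGraph V} (hcrit : IsCritical G)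
    (hchrom4 : 4 ≤ edgeChromaticNumber G) (hdegle : ∀ x, deg G x ≤ 3) {v u : V}
    (hv2 : deg G v = 2) (h : G.Adj v u) : deg G u = 3 := by
  by_contra hu3
  have hu2 : deg G u ≤ 2 := by have := hdegle u; omega
  have hk := chrom_eq_four hcrit hchrom4 hdegle hv2
  have huv : G.Adj u v := h.symm
  obtain ⟨c, hc⟩ := exists_del_coloring hcrit huv
  have hdv : deg (Gdel G u v) v = 1 := by rw [gdel_deg_right huv, hv2]
  have hdu : deg (Gdel G u v) u ≤ 1 := by rw [gdel_deg_left huv]; omega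
  obtain ⟨a, ha, hfu, hfv⟩ := exists_common_free hc u v (by omega)
  exact no_common_free hcrit huv hc (by omega) ha hfu hfv

private lemma no_deg_zero {G : SimpleGraph V} (hcrit : IsCritical G)
    (hmax : maxDeg G = 3) (v : V) : deg G v ≠ 0 := by
  intro h0
  have hiso : ∀ y, ¬ G.Adj v y := by
    have hempty : G.neighborSet v = ∅ := Set.ncard_eq_zero (Set.toFinite _) |>.mp h0
    intro y hy
    rw [show G.Adj v y = (y ∈ G.neighborSet v) from rfl, hempty] at hy
    exact hy
  obtain ⟨v3, hv3⟩ := exists_deg3 hmax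
  have hv3ne : v3 ≠ v := fun hh => by rw [hh, h0] at hv3; exact absurd hv3 (by omega)
  set H : G.Subgraph :=
    { verts := {x | x ≠ v}
      Adj := G.Adj
      adj_sub := fun hxy => hxy
      edge_vert := fun {x y} hxy => (fun hxv => hiso y (hxv ▸ hxy) : x ≠ v)
      symm := ⟨fun x y hxy => hxy.symm⟩ } with hH
  have hne : H ≠ ⊤ := by
    intro ht
    have : v ∈ H.verts := by rw [ht, Subgraph.verts_top]; trivial
    exact this rfl
  have hlt := hcrit.2 H hne
  haveI : Fintype ↥H.verts := Fintype.ofFinite _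
  obtain ⟨c, hc⟩ := chrom_coloring H.coe
  classical
  set g : V → ↥H.verts := fun x => if hx : x = v then ⟨v3, hv3ne⟩ else ⟨x, hx⟩ with hg
  have hgne : ∀ (x : V) (hx : x ≠ v), g x = ⟨x, hx⟩ := by
    intro x hx
    simp [hg, hx]
  have hproper : IsProperEdgeColoring G (edgeChromaticNumber H.coe) fun e => c (e.map g) := by
    constructor
    · intro e he
      induction e using Sym2.ind with
      | _ x y =>
        rw [mem_edgeSet] at he
        have hx : x ≠ v := fun hh => hiso y (hh ▸ he)
        have hy : y ≠ v := fun hh => hiso x (hh ▸ he.symm)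
        have hadj : H.coe.Adj ⟨x, hx⟩ ⟨y, hy⟩ := he
        have := hc.1 _ ((mem_edgeSet _).mpr hadj)
        simp only [Sym2.map_pair_eq, hgne x hx, hgne y hy]
        exact this
    · intro e₁ he₁ e₂ he₂ hne12 hshare
      induction e₁ using Sym2.ind with
      | _ x y =>
        induction e₂ using Sym2.ind with
        | _ z w =>
          rw [mem_edgeSet] at he₁ he₂
          have hx : x ≠ v := fun hh => hiso y (hh ▸ he₁)
          have hy : y ≠ v := fun hh => hiso x (hh ▸ he₁.symm)
          have hz : z ≠ v := fun hh => hiso w (hh ▸ he₂)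
          have hw : w ≠ v := fun hh => hiso z (hh ▸ he₂.symm)
          have hadj₁ : H.coe.Adj ⟨x, hx⟩ ⟨y, hy⟩ := he₁
          have hadj₂ : H.coe.Adj ⟨z, hz⟩ ⟨w, hw⟩ := he₂
          obtain ⟨p, hp₁, hp₂⟩ := hshare
          have hpv : p ≠ v := by
            rw [Sym2.mem_iff] at hp₁
            rcases hp₁ with rfl | rfl <;> assumption
          simp only [Sym2.map_pair_eq, hgne x hx, hgne y hy, hgne z hz, hgne w hw]
          apply hc.2 _ ((mem_edgeSet _).mpr hadj₁) _ ((mem_edgeSet _).mpr hadj₂)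
          · intro heq
            rw [Sym2.eq_iff] at heq
            apply hne12
            rcases heq with ⟨h1, h2⟩ | ⟨h1, h2⟩
            · rw [Subtype.ext_iff] at h1 h2
              simp only at h1 h2
              rw [h1, h2]
            · rw [Subtype.ext_iff] at h1 h2
              simp only at h1 h2
              rw [h1, h2, Sym2.eq_swap]
          · refine ⟨⟨p, hpv⟩, ?_, ?_⟩
            · rw [Sym2.mem_iff] at hp₁ ⊢
              rcases hp₁ with rfl | rfl
              · left; rfl
              · right; rfl
            · rw [Sym2.mem_iff] at hp₂ ⊢
              rcases hp₂ with rfl | rfl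
              · left; rfl
              · right; rfl
  have := chrom_le hproper
  omega

end Mid
section LemB
set_option linter.unusedSectionVars false
variable [Fintype V]

/-- Vizing-type lemma B: a degree-3 vertex cannot have two degree-2 neighbors. -/
private lemma lemB {G : SimpleGraph V} (hcrit : IsCritical G)
    (hchrom4 : 4 ≤ edgeChromaticNumber G) (hdegle : ∀ x, deg G x ≤ 3) {u v v' : V}
    (hu3 : deg G u = 3) (hvv' : v ≠ v') (huv : G.Adj u v) (huv' : G.Adj u v')
    (hv2 : deg G v = 2) (hv'2 : deg G v' = 2) : False := by
  classical
  have hk : edgeChromaticNumber G = 4 := chrom_eq_four hcrit hchrom4 hdegle hv2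
  have hNCF : ∀ {p q : V}, G.Adj p q → ∀ {c' : Sym2 V → ℕ},
      IsProperEdgeColoring (Gdel G p q) 3 c' →
      ∀ a, a < 3 → Free (Gdel G p q) c' p a → Free (Gdel G p q) c' q a → False := by
    intro p q h c' hc' a ha h1 h2
    have := chrom_le_of_extend h hc' ha h1 h2
    omega
  -- the third neighbor of u
  have hex : ∃ w ∈ G.neighborSet u, w ≠ v ∧ w ≠ v' := by
    by_contra hne
    push_neg at hne
    have hsub : G.neighborSet u ⊆ {v, v'} := by
      intro z hz
      by_cases hzv : z = v
      · exact Or.inl hzv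
      · exact Or.inr (hne z hz hzv)
    have := Set.ncard_le_ncard hsub (Set.toFinite _)
    rw [Set.ncard_pair hvv'] at this
    rw [show (G.neighborSet u).ncard = deg G u from rfl, hu3] at this
    omega
  obtain ⟨w, hwmem, hwv, hwv'⟩ := hex
  have huw : G.Adj u w := hwmem
  have hnbru : G.neighborSet u = {v, v', w} := by
    symm
    apply Set.eq_of_subset_of_ncard_le
    · intro z hz
      rcases hz with rfl | rfl | rfl
      · exact huv
      · exact huv'
      · exact huw
    · have h3 : ({v, v', w} : Set V).ncard = 3 := by
        rw [Set.ncard_insert_of_notMem (by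
          simp only [Set.mem_insert_iff, Set.mem_singleton_iff]
          push_neg
          exact ⟨hvv', Ne.symm hwv⟩), Set.ncard_pair (Ne.symm hwv')]
      rw [show (G.neighborSet u).ncard = deg G u from rfl, hu3, h3]
    · exact Set.toFinite _
  -- the other neighbors of v and v'
  have hother : ∀ z : V, deg G z = 2 → G.Adj u z →
      ∃ t, G.neighborSet z = {u, t} ∧ t ≠ u := by
    intro z hz2 hadj
    obtain ⟨a, b, hab, hset⟩ := Set.ncard_eq_two.mp hz2
    have humem : u ∈ ({a, b} : Set V) := by rw [← hset]; exact hadj.symm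
    rcases humem with rfl | rfl
    · exact ⟨b, hset, Ne.symm hab⟩
    · refine ⟨a, by rw [hset, Set.pair_comm], hab⟩
  obtain ⟨x, hnbrvx, hxu⟩ := hother v hv2 huv
  obtain ⟨y, hnbrv'y, hyu⟩ := hother v' hv'2 huv'
  have hvx : G.Adj v x := by rw [← mem_neighborSet, hnbrvx]; exact Or.inr rfl
  have hv'y : G.Adj v' y := by rw [← mem_neighborSet, hnbrv'y]; exact Or.inr rfl
  -- the coloring of G - uv
  obtain ⟨c, hc⟩ := exists_del_coloring hcrit huv
  rw [hk] at hc
  norm_num at hc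
  -- neighbor structure in G - uv
  have hnbr₁u : (Gdel G u v).neighborSet u = {v', w} := by
    rw [gdel_nbr_left, hnbru]
    ext z
    simp only [Set.mem_diff, Set.mem_insert_iff, Set.mem_singleton_iff]
    constructor
    · rintro ⟨rfl | rfl | rfl, hzz⟩
      · exact absurd rfl hzz
      · exact Or.inl rfl
      · exact Or.inr rfl
    · rintro (rfl | rfl)
      · exact ⟨Or.inr (Or.inl rfl), Ne.symm hvv'⟩
      · exact ⟨Or.inr (Or.inr rfl), hwv⟩
  have hnbr₁v : (Gdel G u v).neighborSet v = {x} := by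
    rw [gdel_nbr_right, hnbrvx]
    ext z
    simp only [Set.mem_diff, Set.mem_insert_iff, Set.mem_singleton_iff]
    constructor
    · rintro ⟨rfl | rfl, hzz⟩
      · exact absurd rfl hzz
      · rfl
    · rintro rfl
      exact ⟨Or.inr rfl, hxu⟩
  have hnbr₁v' : (Gdel G u v).neighborSet v' = {u, y} := by
    rw [gdel_nbr_other G u v v' (Ne.symm huv'.ne) (Ne.symm hvv'), hnbrv'y]
  have hadj₁u : ∀ z, (Gdel G u v).Adj u z ↔ (z = v' ∨ z = w) := by
    intro z
    rw [← mem_neighborSet, hnbr₁u]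
    simp
  have hadj₁v : ∀ z, (Gdel G u v).Adj v z ↔ z = x := by
    intro z
    rw [← mem_neighborSet, hnbr₁v]
    simp
  have hadj₁v' : ∀ z, (Gdel G u v).Adj v' z ↔ (z = u ∨ z = y) := by
    intro z
    rw [← mem_neighborSet, hnbr₁v']
    simp
  have hadjuv' : (Gdel G u v).Adj u v' := (hadj₁u v').mpr (Or.inl rfl)
  have hadjuw : (Gdel G u v).Adj u w := (hadj₁u w).mpr (Or.inr rfl)
  have hadjvx : (Gdel G u v).Adj v x := (hadj₁v x).mpr rfl
  have hadjv'y : (Gdel G u v).Adj v' y := (hadj₁v' y).mpr (Or.inr rfl)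
  -- the colors
  set β := c s(u, v') with hβ
  set γ := c s(u, w) with hγ
  have hβ3 : β < 3 := hc.1 _ ((mem_edgeSet _).mpr hadjuv')
  have hγ3 : γ < 3 := hc.1 _ ((mem_edgeSet _).mpr hadjuw)
  have hβγ : β ≠ γ := by
    apply hc.2 _ ((mem_edgeSet _).mpr hadjuv') _ ((mem_edgeSet _).mpr hadjuw)
    · intro hh
      exact hwv' (Sym2.congr_right.mp hh).symm
    · exact ⟨u, by simp, by simp⟩
  set α := 3 - β - γ with hα
  have hα3 : α < 3 := by omega
  have hαβ : α ≠ β := by omega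
  have hαγ : α ≠ γ := by omega
  have hfreeuα : Free (Gdel G u v) c u α := by
    intro z hz
    rcases (hadj₁u z).mp hz with rfl | rfl
    · rw [← hβ]; omega
    · rw [← hγ]; omega
  -- the color at v's other edge is α
  have hvxα : c s(v, x) = α := by
    by_contra hne
    exact hNCF huv hc α hα3 hfreeuα
      (fun z hz => by rw [(hadj₁v z).mp hz]; exact hne)
  -- Step 1: u belongs to the (α,γ)-Kempe component of v
  have hreach1 : u ∈ KS (Gdel G u v) c α γ v := by
    by_contra hR
    exact hNCF huv (kswap_proper (v0 := v) hc hαγ hα3 hγ3) α hα3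
      (kswap_free_of_not_mem hR hfreeuα)
      (kswap_free_base hαγ (fun z hz => (hadj₁v z).mp hz) hvxα)
  -- the shifted coloring on G - uv'
  set c₃ : Sym2 V → ℕ := fun e => if e = s(u, v) then β else c e with hc₃
  have hc₃uv : c₃ s(u, v) = β := by simp [hc₃]
  have hc₃other : ∀ e, e ≠ s(u, v) → c₃ e = c e := by
    intro e he
    simp [hc₃, he]
  have hedge₂ : ∀ e, e ∈ (Gdel G u v').edgeSet → e ≠ s(u, v) → e ∈ (Gdel G u v).edgeSet := by
    intro e he hne
    exact (gdel_edgeSet G u v e).mpr ⟨((gdel_edgeSet G u v' e).mp he).1, hne⟩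
  have hc₃p : IsProperEdgeColoring (Gdel G u v') 3 c₃ := by
    constructor
    · intro e he
      by_cases h1 : e = s(u, v)
      · rw [h1, hc₃uv]; exact hβ3
      · rw [hc₃other e h1]
        exact hc.1 e (hedge₂ e he h1)
    · intro e₁ he₁ e₂ he₂ hne12 hshare
      obtain ⟨p, hp₁, hp₂⟩ := hshare
      have key : ∀ e, e ∈ (Gdel G u v').edgeSet → e ≠ s(u, v) → p ∈ e → p ∈ s(u, v) →
          c e ≠ β := by
        intro e he hne hp hpuv
        have heG₁ : e ∈ (Gdel G u v).edgeSet := hedge₂ e he hne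
        rw [Sym2.mem_iff] at hpuv
        rcases hpuv with hpu | hpu
        all_goals rw [hpu] at hp
        · obtain ⟨z, hz, rfl⟩ := edge_eq_of_mem heG₁ hp
          rcases (hadj₁u z).mp hz with hz1 | hz1
          · rw [hz1] at he
            exact absurd rfl ((gdel_edgeSet G u v' _).mp he).2
          · rw [hz1, ← hγ]
            exact Ne.symm hβγ
        · obtain ⟨z, hz, rfl⟩ := edge_eq_of_mem heG₁ hp
          rw [(hadj₁v z).mp hz, hvxα]
          exact hαβ
      by_cases h1 : e₁ = s(u, v) <;> by_cases h2 : e₂ = s(u, v)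
      · exact absurd (h1.trans h2.symm) hne12
      · rw [h1, hc₃uv, hc₃other e₂ h2]
        exact fun hh => key e₂ he₂ h2 hp₂ (h1 ▸ hp₁) hh.symm
      · rw [h2, hc₃uv, hc₃other e₁ h1]
        exact key e₁ he₁ h1 hp₁ (h2 ▸ hp₂)
      · rw [hc₃other e₁ h1, hc₃other e₂ h2]
        exact hc.2 e₁ (hedge₂ e₁ he₁ h1) e₂ (hedge₂ e₂ he₂ h2) hne12 ⟨p, hp₁, hp₂⟩
  -- neighbor structure in G - uv'
  have hnbr₂u : (Gdel G u v').neighborSet u = {v, w} := by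
    rw [gdel_nbr_left, hnbru]
    ext z
    simp only [Set.mem_diff, Set.mem_insert_iff, Set.mem_singleton_iff]
    constructor
    · rintro ⟨rfl | rfl | rfl, hzz⟩
      · exact Or.inl rfl
      · exact absurd rfl hzz
      · exact Or.inr rfl
    · rintro (rfl | rfl)
      · exact ⟨Or.inl rfl, hvv'⟩
      · exact ⟨Or.inr (Or.inr rfl), hwv'⟩
  have hadj₂u : ∀ z, (Gdel G u v').Adj u z ↔ (z = v ∨ z = w) := by
    intro z
    rw [← mem_neighborSet, hnbr₂u]
    simp
  have hnbr₂v' : (Gdel G u v').neighborSet v' = {y} := by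
    rw [gdel_nbr_right, hnbrv'y]
    ext z
    simp only [Set.mem_diff, Set.mem_insert_iff, Set.mem_singleton_iff]
    constructor
    · rintro ⟨rfl | rfl, hzz⟩
      · exact absurd rfl hzz
      · rfl
    · rintro rfl
      exact ⟨Or.inr rfl, hyu⟩
  have hadj₂v' : ∀ z, (Gdel G u v').Adj v' z ↔ z = y := by
    intro z
    rw [← mem_neighborSet, hnbr₂v']
    simp
  have hsuwv : s(u, w) ≠ s(u, v) := by
    intro hh
    rw [Sym2.eq_iff] at hh
    rcases hh with ⟨-, h2⟩ | ⟨h1, -⟩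
    · exact hwv h2
    · exact huv.ne h1
  have hfreeu₂ : Free (Gdel G u v') c₃ u α := by
    intro z hz
    rcases (hadj₂u z).mp hz with rfl | rfl
    · rw [hc₃uv]; exact Ne.symm hαβ
    · rw [hc₃other _ hsuwv, ← hγ]; exact Ne.symm hαγ
  -- the color at v''s other edge is α
  have hv'yuv : s(v', y) ≠ s(u, v) := by
    intro hh
    rw [Sym2.eq_iff] at hh
    rcases hh with ⟨h1, -⟩ | ⟨h1, -⟩
    · exact huv'.ne h1.symm
    · exact hvv' h1.symm
  have hv'yα : c₃ s(v', y) = α := by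
    by_contra hne
    exact hNCF huv' hc₃p α hα3 hfreeu₂
      (fun z hz => by rw [(hadj₂v' z).mp hz]; exact hne)
  have hv'yα' : c s(v', y) = α := by rwa [hc₃other _ hv'yuv] at hv'yα
  -- Step 3: u belongs to the (α,γ)-Kempe component of v' in the shifted coloring
  have hreach2 : u ∈ KS (Gdel G u v') c₃ α γ v' := by
    by_contra hR
    exact hNCF huv' (kswap_proper (v0 := v') hc₃p hαγ hα3 hγ3) α hα3
      (kswap_free_of_not_mem hR hfreeu₂)
      (kswap_free_base hαγ (fun z hz => (hadj₂v' z).mp hz) hv'yα)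
  -- Step 4: the two Kempe relations coincide
  have hKReq : KR (Gdel G u v) c α γ = KR (Gdel G u v') c₃ α γ := by
    funext p q
    apply propext
    constructor
    · rintro ⟨⟨hadj, hne1⟩, hcol⟩
      have hne2 : s(p, q) ≠ s(u, v') := by
        intro hh
        rw [hh, ← hβ] at hcol
        omega
      exact ⟨⟨hadj, hne2⟩, by rwa [hc₃other _ hne1]⟩
    · rintro ⟨⟨hadj, hne2⟩, hcol⟩
      have hne1 : s(p, q) ≠ s(u, v) := by
        intro hh
        rw [hh, hc₃uv] at hcol
        omega
      exact ⟨⟨hadj, hne1⟩, by rwa [hc₃other _ hne1] at hcol⟩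
  have hreach2' : u ∈ KS (Gdel G u v) c α γ v' := by
    have : KS (Gdel G u v') c₃ α γ v' = KS (Gdel G u v) c α γ v' := by
      rw [KS, KS, hKReq]
    rw [← this]
    exact hreach2
  -- Step 5: contradiction via the path structure
  set K : SimpleGraph V :=
    { Adj := fun p q => KR (Gdel G u v) c α γ p q
      symm := ⟨fun p q h => KR_symm (Gdel G u v) c α γ h⟩
      loopless := ⟨fun p hp => (Gdel G u v).irrefl hp.1⟩ } with hK
  have hKadj : ∀ p q, K.Adj p q ↔ KR (Gdel G u v) c α γ p q := fun _ _ => Iff.rfl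
  have hdegK : ∀ z, deg K z ≤ 2 := by
    intro z
    have hinj : Set.InjOn (fun t => c s(z, t)) (K.neighborSet z) := by
      intro t₁ h₁ t₂ h₂ heq
      by_contra hne
      exact hc.2 s(z, t₁) ((mem_edgeSet _).mpr h₁.1) s(z, t₂) ((mem_edgeSet _).mpr h₂.1)
        (fun hh => hne (Sym2.congr_right.mp hh)) ⟨z, by simp, by simp⟩ heq
    have himg : (fun t => c s(z, t)) '' K.neighborSet z ⊆ {α, γ} := by
      rintro _ ⟨t, ht, rfl⟩
      rcases ht.2 with hh | hh
      · exact Or.inl hh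
      · exact Or.inr hh
    calc deg K z = (K.neighborSet z).ncard := rfl
      _ = ((fun t => c s(z, t)) '' K.neighborSet z).ncard := (Set.ncard_image_of_injOn hinj).symm
      _ ≤ ({α, γ} : Set ℕ).ncard := Set.ncard_le_ncard himg (Set.toFinite _)
      _ ≤ 2 := le_of_eq (Set.ncard_pair hαγ)
  have hKnbru : K.neighborSet u = {w} := by
    ext z
    constructor
    · rintro ⟨hadj, hcol⟩
      rcases (hadj₁u z).mp hadj with rfl | rfl
      · rw [← hβ] at hcol; omega
      · rfl
    · rintro rfl
      exact ⟨hadjuw, Or.inr hγ.symm⟩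
  have hKnbrv : K.neighborSet v = {x} := by
    ext z
    constructor
    · rintro ⟨hadj, hcol⟩
      exact (hadj₁v z).mp hadj
    · rintro rfl
      exact ⟨hadjvx, Or.inl hvxα⟩
  have hKnbrv' : K.neighborSet v' = {y} := by
    ext z
    constructor
    · rintro ⟨hadj, hcol⟩
      rcases (hadj₁v' z).mp hadj with rfl | rfl
      · rw [Sym2.eq_swap, ← hβ] at hcol; omega
      · rfl
    · rintro rfl
      exact ⟨hadjv'y, Or.inl hv'yα'⟩
  have hdKu : deg K u ≤ 1 := by
    rw [show deg K u = (K.neighborSet u).ncard from rfl, hKnbru, Set.ncard_singleton]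
  have hdKv : deg K v ≤ 1 := by
    rw [show deg K v = (K.neighborSet v).ncard from rfl, hKnbrv, Set.ncard_singleton]
  have hdKv' : deg K v' ≤ 1 := by
    rw [show deg K v' = (K.neighborSet v').ncard from rfl, hKnbrv', Set.ncard_singleton]
  exact no_three_endpoints hdegK huv.ne huv'.ne hvv' hdKu hdKv hdKv' hreach1 hreach2'

end LemB
set_option linter.unusedSectionVars false in
/-- If `G` is 3-critical, then `|E(G)| ≥ (4/3)·|V(G)|`. -/
theorem edge_bound_3critical [Fintype V] (G : SimpleGraph V)
    (hG : IsKCritical G 3) :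
    (4 : ℚ) / 3 * Fintype.card V ≤ G.edgeSet.ncard := by
  classical
  obtain ⟨hcrit, hmax⟩ := hG
  have hdegle : ∀ x, deg G x ≤ 3 := deg_le_of_maxDeg hmax
  obtain ⟨v3, hv3⟩ := exists_deg3 hmax
  have hchrom3 : 3 ≤ edgeChromaticNumber G := three_le_chrom hv3
  have hchrom4 : 4 ≤ edgeChromaticNumber G := by
    have h1 := hcrit.1
    rw [hmax] at h1
    omega
  have hdeg23 : ∀ x, deg G x = 2 ∨ deg G x = 3 := by
    intro x
    have h0 := no_deg_zero hcrit hmax x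
    have h1 := no_deg_one hcrit hchrom4 hdegle x
    have h3 := hdegle x
    omega
  haveI : DecidableRel G.Adj := Classical.decRel _
  have hdegeq : ∀ x, deg G x = G.degree x := by
    intro x
    rw [deg, Set.ncard_eq_toFinset_card', ← SimpleGraph.neighborFinset_def]
    rfl
  set D2 := Finset.univ.filter (fun x => deg G x = 2) with hD2
  set D3 := Finset.univ.filter (fun x => deg G x = 3) with hD3
  have hfeq : Finset.univ.filter (fun x => ¬ deg G x = 2) = D3 := by
    ext x
    simp only [hD3, Finset.mem_filter, Finset.mem_univ, true_and]
    constructor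
    · intro h
      exact (hdeg23 x).resolve_left h
    · intro h3 h2
      rw [h2] at h3
      omega
  have hsplit : Fintype.card V = D2.card + D3.card := by
    have h2 := Finset.card_filter_add_card_filter_not
      (s := Finset.univ) (p := fun x => deg G x = 2)
    rw [hfeq, Finset.card_univ, ← hD2] at h2
    omega
  have hsum2 : ∑ v ∈ D2, deg G v = 2 * D2.card := by
    rw [Finset.sum_congr rfl (fun x hx => ((Finset.mem_filter.mp hx).2 : deg G x = 2)),
      Finset.sum_const, smul_eq_mul, mul_comm]
  have hsum3 : ∑ v ∈ D3, deg G v = 3 * D3.card := by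
    rw [Finset.sum_congr rfl (fun x hx => ((Finset.mem_filter.mp hx).2 : deg G x = 3)),
      Finset.sum_const, smul_eq_mul, mul_comm]
  have hdegsum : ∑ x, deg G x = 2 * D2.card + 3 * D3.card := by
    have h := Finset.sum_filter_add_sum_filter_not Finset.univ (fun x => deg G x = 2) (deg G)
    rw [hfeq, ← hD2] at h
    omega
  have hhand : ∑ x, deg G x = 2 * G.edgeSet.ncard := by
    rw [Finset.sum_congr rfl (fun x _ => hdegeq x), G.sum_degrees_eq_twice_card_edges,
      Set.ncard_eq_toFinset_card']
    try rfl
  have hkey : 2 * D2.card ≤ D3.card := by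
    calc 2 * D2.card = ∑ v ∈ D2, deg G v := hsum2.symm
      _ = ∑ v ∈ D2, (D3.filter (fun z => G.Adj v z)).card := by
          apply Finset.sum_congr rfl
          intro v hv
          have hv2 : deg G v = 2 := (Finset.mem_filter.mp hv).2
          have hfilt : D3.filter (fun z => G.Adj v z) = G.neighborFinset v := by
            ext z
            simp only [hD3, Finset.mem_filter, Finset.mem_univ, true_and,
              SimpleGraph.mem_neighborFinset]
            exact ⟨fun h => h.2, fun h => ⟨lemA hcrit hchrom4 hdegle hv2 h, h⟩⟩
          rw [hfilt]
          exact hdegeq v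
      _ = ∑ v ∈ D2, ∑ z ∈ D3, (if G.Adj v z then 1 else 0) := by
          apply Finset.sum_congr rfl
          intro v _
          rw [Finset.card_filter]
      _ = ∑ z ∈ D3, ∑ v ∈ D2, (if G.Adj v z then 1 else 0) := Finset.sum_comm
      _ = ∑ z ∈ D3, (D2.filter (fun v => G.Adj v z)).card := by
          apply Finset.sum_congr rfl
          intro z _
          rw [Finset.card_filter]
      _ ≤ ∑ _z ∈ D3, 1 := by
          apply Finset.sum_le_sum
          intro z hz
          have hz3 : deg G z = 3 := (Finset.mem_filter.mp hz).2
          apply Finset.card_le_one.mpr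
          intro a ha b hb
          have ha' := Finset.mem_filter.mp ha
          have hb' := Finset.mem_filter.mp hb
          have ha2 : deg G a = 2 := (Finset.mem_filter.mp ha'.1).2
          have hb2 : deg G b = 2 := (Finset.mem_filter.mp hb'.1).2
          by_contra hab
          exact lemB hcrit hchrom4 hdegle hz3 hab ha'.2.symm hb'.2.symm ha2 hb2
      _ = D3.card := by simp
  have hcard : 8 * Fintype.card V ≤ 6 * G.edgeSet.ncard := by omega
  have hq : (8 : ℚ) * (Fintype.card V : ℚ) ≤ 6 * (G.edgeSet.ncard : ℚ) := by
    exact_mod_cast hcard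
  rw [div_mul_eq_mul_div, div_le_iff₀ (by norm_num : (0 : ℚ) < 3)]
  linarith
end
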